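/- arXiv:2006.14048 — 7 statements merged into one kernel-verified Lean document; each statement's English description precedes it below -/
import Mathlib

section
/- If H is a finitely presented group that embeds into an ultrapower of a group G, then H is fully residually G: for every finite set of nontrivial elements h₁,...,hₚ of H, there is a homomorphism f: H → G with f(hᵢ) ≠ e for all i. -/
/-- If a finitely presented group `H` embeds into an ultrapower of a group `G`,
then `H` is fully residually `G`: any finite set of nontrivial elements of `H`
is separated from the identity by a single homomorphism `H →* G`. -/
theorem stmt3 {G H : Type*} [Group G] [Group H]
    (m k : ℕ) (rels : Fin k → FreeGroup (Fin m))
    (e : H ≃* PresentedGroup (Set.range rels))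
    {I : Type*} (𝒰 : Ultrafilter I)
    (φ : H →* Filter.Germ (𝒰 : Filter I) G) (hφ : Function.Injective φ)
    (p : ℕ) (h : Fin p → H) (hh : ∀ j, h j ≠ 1) :
    ∃ f : H →* G, ∀ j, f (h j) ≠ 1 := by
  classical
  set R : Set (FreeGroup (Fin m)) := Set.range rels with hR
  let π : FreeGroup (Fin m) →* PresentedGroup R := PresentedGroup.mk R
  -- choose representatives for the images of the generators
  let gens : Fin m → Filter.Germ (𝒰 : Filter I) G :=
    fun a => φ (e.symm (PresentedGroup.of a))
  have hrep : ∀ a, ∃ x : I → G, (x : Filter.Germ (𝒰 : Filter I) G) = gens a := by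
    intro a
    obtain ⟨x, hx⟩ := Quotient.exists_rep (gens a)
    exact ⟨x, hx⟩
  choose x hx using hrep
  -- for each index, the induced hom on the free group
  let L : I → (FreeGroup (Fin m) →* G) := fun i0 => FreeGroup.lift (fun a => x a i0)
  -- key computation: the hom into the germ factors pointwise
  have key : ∀ w : FreeGroup (Fin m),
      φ (e.symm (π w)) = ((fun i0 => L i0 w : I → G) : Filter.Germ (𝒰 : Filter I) G) := by
    have heq : φ.comp ((e.symm : PresentedGroup R →* H).comp π)
        = (Filter.Germ.coeMulHom (𝒰 : Filter I)).comp (Pi.monoidHom L) := by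
      apply FreeGroup.ext_hom
      intro a
      show φ (e.symm (π (FreeGroup.of a)))
        = ((fun i0 => L i0 (FreeGroup.of a) : I → G) : Filter.Germ (𝒰 : Filter I) G)
      have h1 : π (FreeGroup.of a) = PresentedGroup.of a := rfl
      have h2 : (fun i0 => L i0 (FreeGroup.of a) : I → G) = x a := by
        funext i0
        simp [L]
      rw [h1, h2, hx a]
    intro w
    have := congrFun (congrArg (fun F : _ →* _ => (F : FreeGroup (Fin m) → _)) heq) w
    exact this
  -- sets in the ultrafilter
  have hrelset : ∀ t : Fin k, {i0 : I | L i0 (rels t) = 1} ∈ 𝒰 := by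
    intro t
    have hmem : rels t ∈ Subgroup.normalClosure R :=
      Subgroup.subset_normalClosure ⟨t, rfl⟩
    have hπ : π (rels t) = 1 := (QuotientGroup.eq_one_iff _).2 hmem
    have := key (rels t)
    rw [hπ] at this
    simp only [map_one] at this
    have : ((fun i0 => L i0 (rels t) : I → G) : Filter.Germ (𝒰 : Filter I) G)
        = ((1 : I → G) : Filter.Germ (𝒰 : Filter I) G) := by
      rw [← this, Filter.Germ.coe_one]
    exact Filter.Germ.coe_eq.1 this
  -- lift the elements h j to the free group
  have hw : ∀ j : Fin p, ∃ w : FreeGroup (Fin m), π w = e (h j) := by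
    intro j
    exact PresentedGroup.mk_surjective R (e (h j))
  choose w hwspec using hw
  have hneset : ∀ j : Fin p, {i0 : I | L i0 (w j) ≠ 1} ∈ 𝒰 := by
    intro j
    have hne : φ (h j) ≠ 1 := by
      intro hcon
      exact hh j (hφ (by simpa using hcon))
    have hkey := key (w j)
    rw [hwspec j, MulEquiv.symm_apply_apply] at hkey
    by_contra hcon
    have hc : {i0 : I | L i0 (w j) ≠ 1}ᶜ ∈ 𝒰 :=
      (Ultrafilter.compl_mem_iff_notMem).2 hcon
    have hc' : {i0 : I | L i0 (w j) = 1} ∈ 𝒰 := by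
      simpa [Set.compl_setOf] using hc
    apply hne
    rw [hkey, ← Filter.Germ.coe_one, Filter.Germ.coe_eq]
    exact hc'
  -- intersect everything
  have hbig : ((⋂ t : Fin k, {i0 : I | L i0 (rels t) = 1}) ∩
      ⋂ j : Fin p, {i0 : I | L i0 (w j) ≠ 1}) ∈ 𝒰 := by
    apply Filter.inter_mem
    · exact (Filter.iInter_mem).2 hrelset
    · exact (Filter.iInter_mem).2 hneset
  obtain ⟨i0, hi0⟩ := Filter.nonempty_of_mem hbig
  obtain ⟨hi1, hi2⟩ := hi0
  simp only [Set.mem_iInter, Set.mem_setOf_eq] at hi1 hi2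
  -- build the homomorphism
  have hrels1 : ∀ r ∈ R, FreeGroup.lift (fun a => x a i0) r = 1 := by
    rintro r ⟨t, rfl⟩
    exact hi1 t
  let f0 : PresentedGroup R →* G := PresentedGroup.toGroup hrels1
  refine ⟨f0.comp (e : H →* PresentedGroup R), ?_⟩
  intro j
  have hfactor : f0.comp π = L i0 := by
    apply FreeGroup.ext_hom
    intro a
    show f0 (π (FreeGroup.of a)) = L i0 (FreeGroup.of a)
    have h1 : π (FreeGroup.of a) = PresentedGroup.of a := rfl
    rw [h1]
    simp [f0, L, PresentedGroup.toGroup.of]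
  have : f0 (π (w j)) = L i0 (w j) := by
    rw [← hfactor]; rfl
  simp only [MonoidHom.comp_apply]
  rw [show (e : H →* PresentedGroup R) (h j) = e (h j) from rfl, ← hwspec j, this]
  exact hi2 j
end

section
/- A group G is left-orderable if and only if for every finite subset {g₁,...,gₙ} of G \ {e} and every m ∈ ℕ, there exists a sign vector (ε₁,...,εₙ) ∈ {1,-1}ⁿ such that the identity e is not equal to any product of at most m elements from {g₁^{ε₁},...,gₙ^{εₙ}}. -/
/-- A group is left-orderable if it admits a left-invariant strict total order. -/
def LeftOrderable (G : Type*) [Group G] : Prop :=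
  ∃ lt : G → G → Prop, IsStrictTotalOrder G lt ∧
    ∀ f g h : G, lt f g → lt (h * f) (h * g)

section Aux

variable {G : Type*} [Group G]

/-- From the bounded-length hypothesis, get a sign choice good for all lengths
simultaneously (pigeonhole over the finitely many sign vectors). -/
lemma aux_allLen
    (H : ∀ (n : ℕ) (g : Fin n → G), (∀ i, g i ≠ 1) → ∀ m : ℕ,
        ∃ ε : Fin n → Bool, ∀ l : List G, l ≠ [] → l.length ≤ m →
          (∀ x ∈ l, ∃ i, x = (if ε i then g i else (g i)⁻¹)) → l.prod ≠ 1)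
    (n : ℕ) (g : Fin n → G) (hg : ∀ i, g i ≠ 1) :
    ∃ ε : Fin n → Bool, ∀ l : List G, l ≠ [] →
      (∀ x ∈ l, ∃ i, x = (if ε i then g i else (g i)⁻¹)) → l.prod ≠ 1 := by
  by_contra hc
  push_neg at hc
  choose l hl1 hl2 hl3 using hc
  obtain ⟨ε, hε⟩ := H n g hg (Finset.univ.sup fun ε => (l ε).length)
  exact hε (l ε) (hl1 ε)
    (Finset.le_sup (f := fun ε => (l ε).length) (Finset.mem_univ ε)) (hl2 ε) (hl3 ε)

/-- For every finite set `S`, there is a sign function `σ : G → Bool` so that no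
nonempty product of `σ`-signed nontrivial elements of `S` equals `1`. -/
lemma aux_exists_sign
    (H : ∀ (n : ℕ) (g : Fin n → G), (∀ i, g i ≠ 1) → ∀ m : ℕ,
        ∃ ε : Fin n → Bool, ∀ l : List G, l ≠ [] → l.length ≤ m →
          (∀ x ∈ l, ∃ i, x = (if ε i then g i else (g i)⁻¹)) → l.prod ≠ 1)
    (S : Finset G) :
    ∃ σ : G → Bool, ∀ l : List G, l ≠ [] →
      (∀ x ∈ l, ∃ g ∈ S, g ≠ 1 ∧ x = (if σ g then g else g⁻¹)) → l.prod ≠ 1 := by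
  classical
  set S' : Finset G := S.filter (· ≠ 1) with hS'
  set e := S'.equivFin with he
  have hg : ∀ i : Fin S'.card, ((e.symm i : S') : G) ≠ 1 := by
    intro i
    exact (Finset.mem_filter.mp (e.symm i).2).2
  obtain ⟨ε, hε⟩ := aux_allLen H S'.card (fun i => ((e.symm i : S') : G)) hg
  refine ⟨fun x => if h : x ∈ S' then ε (e ⟨x, h⟩) else true, ?_⟩
  intro l hl hent
  refine hε l hl ?_
  intro x hx
  obtain ⟨g, hgS, hg1, hxg⟩ := hent x hx
  have hgS' : g ∈ S' := Finset.mem_filter.mpr ⟨hgS, hg1⟩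
  refine ⟨e ⟨g, hgS'⟩, ?_⟩
  rw [hxg]
  simp [hgS']

end Aux

/-- `G` is left-orderable iff for every finite family `g₁, …, gₙ` of nontrivial
elements and every `m`, there is a choice of signs `ε` such that the identity
is not a product of at most `m` elements from `{g₁^{ε₁}, …, gₙ^{εₙ}}`. -/
theorem stmt4 {G : Type*} [Group G] :
    LeftOrderable G ↔
      ∀ (n : ℕ) (g : Fin n → G), (∀ i, g i ≠ 1) → ∀ m : ℕ,
        ∃ ε : Fin n → Bool, ∀ l : List G, l ≠ [] → l.length ≤ m →
          (∀ x ∈ l, ∃ i, x = (if ε i then g i else (g i)⁻¹)) → l.prod ≠ 1 := by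
  classical
  constructor
  · rintro ⟨lt, hsto, hinv⟩ n g hg m
    haveI := hsto
    refine ⟨fun i => if lt 1 (g i) then true else false, ?_⟩
    have hpos : ∀ i : Fin n,
        lt 1 (if (if lt 1 (g i) then true else false) then g i else (g i)⁻¹) := by
      intro i
      by_cases h : lt 1 (g i)
      · simp only [if_pos h]; exact h
      · have h3 : lt (g i) 1 := by
          rcases trichotomous_of lt 1 (g i) with h1 | h1 | h1
          · exact absurd h1 h
          · exact absurd h1.symm (hg i)
          · exact h1
        have := hinv (g i) 1 (g i)⁻¹ h3
        simp only [inv_mul_cancel, mul_one] at this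
        simpa only [if_neg h, Bool.false_eq_true, if_false] using this
    have hprod : ∀ l : List G, l ≠ [] → (∀ x ∈ l, lt 1 x) → lt 1 l.prod := by
      intro l
      induction l with
      | nil => intro h; exact absurd rfl h
      | cons x t ih =>
        intro _ hmem
        rcases eq_or_ne t [] with rfl | ht
        · simpa using hmem x List.mem_cons_self
        · have h1 : lt 1 t.prod := ih ht fun y hy => hmem y (List.mem_cons_of_mem x hy)
          have h2 : lt x (x * t.prod) := by
            have := hinv 1 t.prod x h1
            simpa using this
          have hx : lt 1 x := hmem x List.mem_cons_self
          rw [List.prod_cons]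
          exact _root_.trans hx h2
    intro l hl _ hent hprod1
    have : lt 1 l.prod := hprod l hl fun x hx => by
      obtain ⟨i, rfl⟩ := hent x hx; exact hpos i
    rw [hprod1] at this
    exact irrefl_of lt 1 this
  · intro H
    choose σS hσS using fun S => aux_exists_sign H S
    let U : Ultrafilter (Finset G) := Ultrafilter.of Filter.atTop
    let σ : G → Bool := fun g => if {S | σS S g = true} ∈ U then true else false
    -- agreement on finite sets
    have key : ∀ F : Finset G, ∃ S, F ⊆ S ∧ ∀ g ∈ F, σS S g = σ g := by
      intro F
      have h1 : {S : Finset G | F ⊆ S} ∈ U :=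
        Ultrafilter.of_le Filter.atTop (Filter.mem_atTop F)
      have h2 : (⋂ g ∈ F, {S | σS S g = σ g}) ∈ U := by
        show (⋂ g ∈ F, {S | σS S g = σ g}) ∈ (U : Filter (Finset G))
        rw [Filter.biInter_finset_mem]
        intro g _
        by_cases h : {S | σS S g = true} ∈ U
        · have hσ : σ g = true := if_pos h
          simpa [hσ] using h
        · have hc : {S | σS S g = true}ᶜ ∈ U := Ultrafilter.compl_mem_iff_notMem.mpr h
          have hσ : σ g = false := if_neg h
          have heq : {S | σS S g = true}ᶜ = {S | σS S g = σ g} := by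
            ext S; simp [hσ, Bool.not_eq_true]
          rwa [heq] at hc
      obtain ⟨S, hS1, hS2⟩ := Filter.nonempty_of_mem (Filter.inter_mem h1 h2)
      refine ⟨S, hS1, ?_⟩
      intro g hgF
      simpa using Set.mem_iInter₂.mp hS2 g hgF
    -- global positivity: no nonempty σ-signed product is 1
    have glob : ∀ l : List G, l ≠ [] →
        (∀ x ∈ l, ∃ g, g ≠ 1 ∧ x = (if σ g then g else g⁻¹)) → l.prod ≠ 1 := by
      intro l hl hent
      choose gf hg1 hgx using hent
      obtain ⟨S, hFS, hagree⟩ :=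
        key ((l.attach.map fun x : {y // y ∈ l} => gf x.1 x.2).toFinset)
      refine hσS S l hl ?_
      intro x hx
      have hmem : gf x hx ∈ (l.attach.map fun x : {y // y ∈ l} => gf x.1 x.2).toFinset := by
        rw [List.mem_toFinset, List.mem_map]
        exact ⟨⟨x, hx⟩, List.mem_attach _ _, rfl⟩
      refine ⟨gf x hx, hFS hmem, hg1 x hx, ?_⟩
      rw [hagree _ hmem]
      exact hgx x hx
    -- cone properties
    have hmul : ∀ a b : G, a ≠ 1 → σ a = true → b ≠ 1 → σ b = true →
        (a * b ≠ 1 ∧ σ (a * b) = true) := by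
      intro a b ha1 haσ hb1 hbσ
      have hab : a * b ≠ 1 := by
        intro h
        refine glob [a, b] (by simp) ?_ (by simp [h])
        intro x hx
        rcases List.mem_pair.mp hx with h' | h'
        · exact ⟨a, ha1, by rw [h']; simp [haσ]⟩
        · exact ⟨b, hb1, by rw [h']; simp [hbσ]⟩
      refine ⟨hab, ?_⟩
      by_contra hσab
      have hσab' : σ (a * b) = false := by
        cases h : σ (a * b) with
        | false => rfl
        | true => exact absurd h hσab
      refine glob [a, b, (a * b)⁻¹] (by simp) ?_ (by simp [mul_assoc])
      intro x hx
      simp only [List.mem_cons, List.not_mem_nil, or_false] at hx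
      rcases hx with h' | h' | h'
      · exact ⟨a, ha1, by rw [h']; simp [haσ]⟩
      · exact ⟨b, hb1, by rw [h']; simp [hbσ]⟩
      · exact ⟨a * b, hab, by rw [h']; simp [hσab']⟩
    have hinvσ : ∀ g : G, g ≠ 1 → σ g = false → σ g⁻¹ = true := by
      intro g hg1 hgf
      by_contra h
      have hginv : σ g⁻¹ = false := by
        cases hh : σ g⁻¹ with
        | false => rfl
        | true => exact absurd hh h
      refine glob [g⁻¹, g] (by simp) ?_ (by simp)
      intro x hx
      rcases List.mem_pair.mp hx with h' | h'
      · exact ⟨g, hg1, by rw [h']; simp [hgf]⟩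
      · exact ⟨g⁻¹, by simpa using hg1, by rw [h']; simp [hginv]⟩
    refine ⟨fun a b => a⁻¹ * b ≠ 1 ∧ σ (a⁻¹ * b) = true, ?_, ?_⟩
    · have htri : IsTrichotomous G fun a b => a⁻¹ * b ≠ 1 ∧ σ (a⁻¹ * b) = true := by
        constructor
        intro a b
        suffices hs : (a⁻¹ * b ≠ 1 ∧ σ (a⁻¹ * b) = true) ∨ a = b ∨
            (b⁻¹ * a ≠ 1 ∧ σ (b⁻¹ * a) = true) by
          intro hn1 hn2
          rcases hs with hs | hs | hs
          · exact absurd hs hn1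
          · exact hs
          · exact absurd hs hn2
        rcases eq_or_ne a b with rfl | hab
        · exact Or.inr (Or.inl rfl)
        · have h1 : a⁻¹ * b ≠ 1 := by
            intro h
            exact hab (by rw [← mul_one a, ← h, ← mul_assoc, mul_inv_cancel, one_mul])
          cases h : σ (a⁻¹ * b) with
          | true => exact Or.inl ⟨h1, rfl⟩
          | false =>
            refine Or.inr (Or.inr ?_)
            have h2 : b⁻¹ * a ≠ 1 := by
              intro hh
              apply h1
              have : a⁻¹ * b = (b⁻¹ * a)⁻¹ := by simp [mul_inv_rev]
              rw [this, hh, inv_one]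
            have h3 : σ (b⁻¹ * a) = true := by
              have := hinvσ (a⁻¹ * b) h1 h
              simpa [mul_inv_rev] using this
            exact ⟨h2, h3⟩
      have hirr : IsIrrefl G fun a b => a⁻¹ * b ≠ 1 ∧ σ (a⁻¹ * b) = true := by
        constructor
        intro a ha
        exact ha.1 (by simp)
      have htrans : IsTrans G fun a b => a⁻¹ * b ≠ 1 ∧ σ (a⁻¹ * b) = true := by
        constructor
        intro a b c hab hbc
        have := hmul _ _ hab.1 hab.2 hbc.1 hbc.2
        simpa [mul_assoc] using this
      haveI := htri; haveI := hirr; haveI := htrans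
      haveI : IsStrictOrder G fun a b => a⁻¹ * b ≠ 1 ∧ σ (a⁻¹ * b) = true := {}
      exact {}
    · intro f g h hfg
      simpa [mul_assoc] using hfg
end

section
/- Let G be a group such that for every finite subset F of G there exists a nontrivial element y ∈ G commuting with every element of F. Then G is inner amenable: there is a conjugation-invariant finitely additive probability measure on G not concentrated at the identity. -/
/-- If the centralizer of every finite subset of `G` is nontrivial, then `G` is
inner amenable: there is a conjugation-invariant finitely additive probability
measure on `G` vanishing at the identity. -/
theorem stmt11 {G : Type*} [Group G]
    (h : ∀ F : Finset G, ∃ y : G, y ≠ 1 ∧ ∀ x ∈ F, x * y = y * x) :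
    ∃ μ : Set G → ℝ, (∀ A : Set G, 0 ≤ μ A) ∧ μ Set.univ = 1 ∧
      (∀ A B : Set G, Disjoint A B → μ (A ∪ B) = μ A + μ B) ∧
      μ {1} = 0 ∧
      (∀ (g : G) (A : Set G), μ ((fun x => g * x * g⁻¹) '' A) = μ A) := by
  classical
  choose y hy1 hyc using h
  let U : Ultrafilter (Finset G) := Ultrafilter.of Filter.atTop
  have hU : (U : Filter (Finset G)) ≤ Filter.atTop := Ultrafilter.of_le _
  refine ⟨fun A => if {F | y F ∈ A} ∈ U then 1 else 0, ?_, ?_, ?_, ?_, ?_⟩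
  · intro A; dsimp only; split <;> norm_num
  · have huniv : {F | y F ∈ (Set.univ : Set G)} = Set.univ := by simp
    dsimp only
    rw [huniv]
    exact if_pos Filter.univ_mem
  · intro A B hAB
    have hd : {F | y F ∈ A} ∩ {F | y F ∈ B} = ∅ := by
      ext F
      simp only [Set.mem_inter_iff, Set.mem_setOf_eq, Set.mem_empty_iff_false, iff_false]
      rintro ⟨hA, hB⟩
      exact (hAB.ne_of_mem hA hB) rfl
    have hu : {F | y F ∈ A ∪ B} = {F | y F ∈ A} ∪ {F | y F ∈ B} := by
      ext F; simp [Set.mem_union]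
    have hnot : ¬ ({F | y F ∈ A} ∈ U ∧ {F | y F ∈ B} ∈ U) := by
      rintro ⟨h1, h2⟩
      have := Filter.inter_mem h1 h2
      rw [hd] at this
      exact U.empty_notMem this
    dsimp only
    rw [hu]
    rcases (em ({F | y F ∈ A} ∈ U)) with h1 | h1 <;>
      rcases (em ({F | y F ∈ B} ∈ U)) with h2 | h2
    · exact absurd ⟨h1, h2⟩ hnot
    · simp [Ultrafilter.union_mem_iff, h1, h2]
    · simp [Ultrafilter.union_mem_iff, h1, h2]
    · simp [Ultrafilter.union_mem_iff, h1, h2]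
  · have he : {F | y F ∈ ({1} : Set G)} = ∅ := by
      ext F; simp [hy1 F]
    dsimp only
    rw [he]
    simp [Filter.empty_notMem]
  · intro g A
    have hS : {F : Finset G | g ∈ F} ∈ U := by
      apply hU
      have : Set.Ici ({g} : Finset G) ⊆ {F : Finset G | g ∈ F} := by
        intro F hF
        exact hF (Finset.mem_singleton_self g)
      exact Filter.mem_of_superset (Filter.Ici_mem_atTop _) this
    have key : ∀ F : Finset G, g ∈ F →
        (y F ∈ (fun x => g * x * g⁻¹) '' A ↔ y F ∈ A) := by
      intro F hgF
      have hcomm : g * y F = y F * g := hyc F g hgF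
      constructor
      · rintro ⟨a, haA, ha⟩
        have : a = y F := by
          have : g * a = y F * g := by
            rw [← ha]; group
          rw [← hcomm] at this
          exact mul_left_cancel this
        rwa [← this]
      · intro hA
        refine ⟨y F, hA, ?_⟩
        show g * y F * g⁻¹ = y F
        rw [hcomm, mul_inv_cancel_right]
    have hiff : {F | y F ∈ (fun x => g * x * g⁻¹) '' A} ∈ U ↔ {F | y F ∈ A} ∈ U := by
      constructor
      · intro hmem
        have := Filter.inter_mem hmem hS
        refine Filter.mem_of_superset this ?_
        rintro F ⟨h1, h2⟩
        exact (key F h2).mp h1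
      · intro hmem
        have := Filter.inter_mem hmem hS
        refine Filter.mem_of_superset this ?_
        rintro F ⟨h1, h2⟩
        exact (key F h2).mpr h1
    dsimp only
    rcases em ({F | y F ∈ A} ∈ U) with h1 | h1
    · rw [if_pos (hiff.mpr h1), if_pos h1]
    · rw [if_neg (fun h' => h1 (hiff.mp h')), if_neg h1]
end

section
/- Let G be a subgroup of H. Then G is existentially closed in H if and only if there is an ultrafilter 𝒰 on some index set and an embedding of H into the ultrapower G^𝒰 whose restriction to G is the diagonal embedding. -/
universe u

/-- A system with coefficients from `G ≤ H` (variables `Sum.inl` are coefficient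
slots, `Sum.inr` are unknowns) holds of an assignment in `H`. -/
def SysCHolds {H : Type u} [Group H] {k n : ℕ}
    (S : List (FreeGroup (Fin k ⊕ Fin n) × Bool))
    (a : Fin k → H) (b : Fin n → H) : Prop :=
  ∀ c ∈ S, (c.2 = true → FreeGroup.lift (Sum.elim a b) c.1 = 1) ∧
    (c.2 = false → FreeGroup.lift (Sum.elim a b) c.1 ≠ 1)

private lemma liftComp {α : Type*} {M N : Type*} [Group M] [Group N]
    (ψ : M →* N) (f : α → M) (w : FreeGroup α) :
    ψ (FreeGroup.lift f w) = FreeGroup.lift (fun x => ψ (f x)) w :=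
  FreeGroup.lift_unique (f := fun x => ψ (f x)) (ψ.comp (FreeGroup.lift f)) (fun x => by simp)

private def germCoeHom {I : Type*} (l : Filter I) (G : Type*) [Group G] :
    (I → G) →* Filter.Germ l G :=
  MonoidHom.mk' (fun u => (u : Filter.Germ l G)) (fun u v => Filter.Germ.coe_mul u v)


private theorem stmt13_fwd {H : Type u} [Group H] (G : Subgroup H)
    (hec : ∀ (k n : ℕ) (S : List (FreeGroup (Fin k ⊕ Fin n) × Bool))
        (a : Fin k → G),
        (∃ b : Fin n → H, SysCHolds S (fun j => (a j : H)) b) →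
        ∃ b : Fin n → H, (∀ j, b j ∈ G) ∧ SysCHolds S (fun j => (a j : H)) b) :
      ∃ (I : Type u) (𝒰 : Ultrafilter I)
        (φ : H →* Filter.Germ (𝒰 : Filter I) G),
        Function.Injective φ ∧
        ∀ g : G, φ (g : H) = (↑g : Filter.Germ (𝒰 : Filter I) G) := by
  classical
  -- Key: for every finite subset F of H there is a "partial embedding" into G.
  have key : ∀ F : Finset H, ∃ f : H → G,
      (∀ x ∈ F, ∀ y ∈ F, x * y ∈ F → ((f (x * y) : H) = (f x : H) * (f y : H))) ∧
      (∀ x ∈ F, ∀ y ∈ F, f x = f y → x = y) ∧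
      (∀ x ∈ F, x ∈ G → ((f x : H) = x)) := by
    intro F
    set n := Fintype.card (↥F : Type u) with hn
    set e : (↥F : Type u) ≃ Fin n := Fintype.equivFin _ with he
    set h : Fin n → H := fun i => ((e.symm i : ↥F) : H) with hh
    have hinj : Function.Injective h := by
      intro i j hij
      exact e.symm.injective (Subtype.ext hij) |>.symm ▸ (e.symm.injective (Subtype.ext hij)) ▸ rfl
    have hhe : ∀ (x : H) (hx : x ∈ F), h (e ⟨x, hx⟩) = x := by
      intro x hx
      simp [hh, he]
    set a : Fin n → G := fun i => if hG : h i ∈ G then ⟨h i, hG⟩ else 1 with ha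
    set w1 : Fin n × Fin n × Fin n → FreeGroup (Fin n ⊕ Fin n) × Bool := fun p =>
      (if h p.1 * h p.2.1 = h p.2.2 then
        FreeGroup.of (Sum.inr p.1) * FreeGroup.of (Sum.inr p.2.1) *
          (FreeGroup.of (Sum.inr p.2.2))⁻¹ else 1, true) with hw1
    set w2 : Fin n × Fin n → FreeGroup (Fin n ⊕ Fin n) × Bool := fun p =>
      if p.1 = p.2 then (1, true) else
        (FreeGroup.of (Sum.inr p.1) * (FreeGroup.of (Sum.inr p.2))⁻¹, false) with hw2
    set w3 : Fin n → FreeGroup (Fin n ⊕ Fin n) × Bool := fun i =>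
      (if h i ∈ G then FreeGroup.of (Sum.inr i) * (FreeGroup.of (Sum.inl i))⁻¹ else 1,
        true) with hw3
    set S : List (FreeGroup (Fin n ⊕ Fin n) × Bool) :=
      ((List.finRange n ×ˢ (List.finRange n ×ˢ List.finRange n)).map w1) ++
      (((List.finRange n ×ˢ List.finRange n).map w2) ++ ((List.finRange n).map w3)) with hS
    -- the identity assignment solves the system in H
    have hsolH : SysCHolds S (fun j => ((a j : H))) h := by
      intro c hc
      rw [hS] at hc
      rcases List.mem_append.1 hc with hc | hc'
      · obtain ⟨p, -, rfl⟩ := List.mem_map.1 hc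
        rw [hw1]
        constructor
        · intro _
          dsimp only
          split_ifs with hcond
          · simp [map_mul, map_inv, hcond]
          · simp
        · intro hcon; simp at hcon
      · rcases List.mem_append.1 hc' with hc | hc
        · obtain ⟨p, -, rfl⟩ := List.mem_map.1 hc
          rw [hw2]
          dsimp only
          split_ifs with hcond
          · exact ⟨fun _ => by simp, fun hcon => by simp at hcon⟩
          · refine ⟨fun htt => by simp at htt, fun _ => ?_⟩
            simp only [map_mul, map_inv, FreeGroup.lift_apply_of, Sum.elim_inr]
            intro hcon
            rw [mul_inv_eq_one] at hcon
            exact hcond (hinj hcon)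
        · obtain ⟨i, -, rfl⟩ := List.mem_map.1 hc
          rw [hw3]
          constructor
          · intro _
            dsimp only
            split_ifs with hcond
            · simp only [map_mul, map_inv, FreeGroup.lift_apply_of, Sum.elim_inr, Sum.elim_inl]
              rw [mul_inv_eq_one, ha]
              simp [hcond]
            · simp
          · intro hcon; simp at hcon
    obtain ⟨b, hbG, hbS⟩ := hec n n S a ⟨h, hsolH⟩
    refine ⟨fun x => if hx : x ∈ F then ⟨b (e ⟨x, hx⟩), hbG _⟩ else 1, ?_, ?_, ?_⟩
    · -- multiplicativity
      intro x hx y hy hxy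
      have hmem : w1 (e ⟨x, hx⟩, e ⟨y, hy⟩, e ⟨x * y, hxy⟩) ∈ S := by
        rw [hS]
        refine List.mem_append.2 (Or.inl (List.mem_map.2 ⟨_, ?_, rfl⟩))
        simp [List.pair_mem_product, List.mem_finRange]
      have hcond : h (e ⟨x, hx⟩) * h (e ⟨y, hy⟩) = h (e ⟨x * y, hxy⟩) := by
        rw [hhe, hhe, hhe]
      have heq := (hbS _ hmem).1
      rw [hw1] at heq
      simp only [if_pos hcond] at heq
      have heq2 := heq trivial
      simp only [map_mul, map_inv, FreeGroup.lift_apply_of, Sum.elim_inr] at heq2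
      rw [mul_inv_eq_one] at heq2
      simp only [dif_pos hx, dif_pos hy, dif_pos hxy]
      exact heq2.symm
    · -- injectivity
      intro x hx y hy hfxy
      by_contra hne
      have hij : e ⟨x, hx⟩ ≠ e ⟨y, hy⟩ := by
        intro hcon
        exact hne (by rw [← hhe x hx, ← hhe y hy, hcon])
      have hmem : w2 (e ⟨x, hx⟩, e ⟨y, hy⟩) ∈ S := by
        rw [hS]
        refine List.mem_append.2 (Or.inr (List.mem_append.2 (Or.inl
          (List.mem_map.2 ⟨_, ?_, rfl⟩))))
        simp [List.pair_mem_product, List.mem_finRange]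
      have hneq := (hbS _ hmem).2
      rw [hw2] at hneq
      simp only [if_neg hij] at hneq
      have hneq2 := hneq trivial
      simp only [map_mul, map_inv, FreeGroup.lift_apply_of, Sum.elim_inr] at hneq2
      rw [Ne, mul_inv_eq_one] at hneq2
      apply hneq2
      have := congrArg (fun (g : G) => (g : H)) hfxy
      simpa [dif_pos hx, dif_pos hy] using this
    · -- fixing elements of G
      intro x hx hxG
      have hmem : w3 (e ⟨x, hx⟩) ∈ S := by
        rw [hS]
        exact List.mem_append.2 (Or.inr (List.mem_append.2 (Or.inr
          (List.mem_map.2 ⟨_, List.mem_finRange _, rfl⟩))))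
      have hcond : h (e ⟨x, hx⟩) ∈ G := by rw [hhe]; exact hxG
      have heq := (hbS _ hmem).1
      rw [hw3] at heq
      simp only [if_pos hcond] at heq
      have heq2 := heq trivial
      simp only [map_mul, map_inv, FreeGroup.lift_apply_of, Sum.elim_inr, Sum.elim_inl] at heq2
      rw [mul_inv_eq_one] at heq2
      simp only [dif_pos hx]
      rw [heq2, ha]
      simp only [dif_pos hcond]
      exact hhe x hx
  choose f hf1 hf2 hf3 using key
  refine ⟨Finset H, Ultrafilter.of Filter.atTop, ?_⟩
  have hle : (Ultrafilter.of (Filter.atTop : Filter (Finset H)) : Filter (Finset H))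
      ≤ Filter.atTop := Ultrafilter.of_le _
  have hmem : ∀ x : H, ∀ᶠ F in (Ultrafilter.of (Filter.atTop : Filter (Finset H))
      : Filter (Finset H)), x ∈ F := by
    intro x
    apply hle
    exact Filter.mem_atTop_sets.2
      ⟨{x}, fun F hF => Finset.singleton_subset_iff.1 hF⟩
  set 𝒰 := Ultrafilter.of (Filter.atTop : Filter (Finset H)) with h𝒰
  refine ⟨MonoidHom.mk' (fun x => ((fun F => f F x : Finset H → G) :
    Filter.Germ (𝒰 : Filter (Finset H)) G)) ?_, ?_, ?_⟩
  · intro x y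
    rw [← Filter.Germ.coe_mul, Filter.Germ.coe_eq]
    filter_upwards [hmem x, hmem y, hmem (x * y)] with F hxF hyF hxyF
    exact Subtype.ext (hf1 F x hxF y hyF hxyF)
  · intro x y hxy
    simp only [MonoidHom.mk'_apply, Filter.Germ.coe_eq] at hxy
    obtain ⟨F, hfF, hxF, hyF⟩ := ((hxy.and ((hmem x).and (hmem y))).exists)
    exact hf2 F x hxF y hyF hfF
  · intro g
    exact Filter.Germ.coe_eq.2
      ((hmem (g : H)).mono fun F hgF => Subtype.ext (hf3 F (g : H) hgF g.2))

private theorem stmt13_rev {H : Type u} [Group H] (G : Subgroup H)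
    (h : ∃ (I : Type u) (𝒰 : Ultrafilter I)
        (φ : H →* Filter.Germ (𝒰 : Filter I) G),
        Function.Injective φ ∧
        ∀ g : G, φ (g : H) = (↑g : Filter.Germ (𝒰 : Filter I) G)) :
    (∀ (k n : ℕ) (S : List (FreeGroup (Fin k ⊕ Fin n) × Bool))
        (a : Fin k → G),
        (∃ b : Fin n → H, SysCHolds S (fun j => (a j : H)) b) →
        ∃ b : Fin n → H, (∀ j, b j ∈ G) ∧ SysCHolds S (fun j => (a j : H)) b) := by
  classical
  obtain ⟨I, 𝒰, φ, hinj, hdiag⟩ := h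
  intro k n S a ⟨b, hb⟩
  -- representatives of the germs φ (b j)
  have hrep : ∀ j : Fin n, ∃ u : I → G, (u : Filter.Germ (𝒰 : Filter I) G) = φ (b j) := by
    intro j
    obtain ⟨u, hu⟩ := Quotient.exists_rep (φ (b j))
    exact ⟨u, hu⟩
  choose b' hb' using hrep
  -- pointwise lift in G
  set liftG : I → FreeGroup (Fin k ⊕ Fin n) →* G :=
    fun i => FreeGroup.lift (Sum.elim a (fun j => b' j i)) with hliftG
  -- lift into functions I → G
  set liftP : FreeGroup (Fin k ⊕ Fin n) →* (I → G) :=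
    FreeGroup.lift (Sum.elim (fun j _ => a j) b') with hliftP
  have hpt : ∀ (w : FreeGroup (Fin k ⊕ Fin n)) (i : I), liftP w i = liftG i w := by
    intro w i
    have h0 := liftComp (Pi.evalMonoidHom (fun _ : I => G) i) (Sum.elim (fun j _ => a j) b') w
    simp only [Pi.evalMonoidHom_apply] at h0
    have hfun : (fun x => Sum.elim (fun j (_ : I) => a j) b' x i)
        = Sum.elim a (fun j => b' j i) := by
      funext x; cases x <;> rfl
    rw [hliftP, h0, hfun, hliftG]
  -- lift in H
  set liftH : FreeGroup (Fin k ⊕ Fin n) →* H :=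
    FreeGroup.lift (Sum.elim (fun j => ((a j : H))) b) with hliftH
  -- the germ of the pointwise lift equals φ of the lift in H
  have hgermeq : ∀ w : FreeGroup (Fin k ⊕ Fin n),
      ((liftP w : I → G) : Filter.Germ (𝒰 : Filter I) G) = φ (liftH w) := by
    intro w
    have h1 := liftComp (germCoeHom (𝒰 : Filter I) G) (Sum.elim (fun j _ => a j) b') w
    have h2 := liftComp φ (Sum.elim (fun j => ((a j : H))) b) w
    have hfun : (fun x => germCoeHom (𝒰 : Filter I) G (Sum.elim (fun j (_ : I) => a j) b' x))
        = (fun x => φ (Sum.elim (fun j => ((a j : H))) b x)) := by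
      funext x
      cases x with
      | inl j => exact (hdiag (a j)).symm
      | inr j => exact hb' j
    show germCoeHom (𝒰 : Filter I) G (liftP w) = φ (liftH w)
    rw [hliftP, h1, hliftH, h2, hfun]
  -- eventually the whole system holds pointwise (in G)
  have hev : ∀ᶠ i in (𝒰 : Filter I), ∀ c ∈ S,
      (c.2 = true → liftG i c.1 = 1) ∧ (c.2 = false → liftG i c.1 ≠ 1) := by
    have hfin : {c | c ∈ S}.Finite := S.finite_toSet
    refine (Filter.eventually_all_finite hfin).2 ?_
    intro c hc
    have hbc := hb c hc
    cases hcb : c.2 with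
    | true =>
      have h1 : liftH c.1 = 1 := hbc.1 hcb
      have h2 : ((liftP c.1 : I → G) : Filter.Germ (𝒰 : Filter I) G) = 1 := by
        rw [hgermeq, h1, map_one]
      rw [← Filter.Germ.coe_one, Filter.Germ.coe_eq] at h2
      filter_upwards [h2] with i hi
      exact ⟨fun _ => by rw [← hpt]; exact hi, fun hff => by simp_all⟩
    | false =>
      have h1 : liftH c.1 ≠ 1 := hbc.2 hcb
      have h2 : ¬ ((liftP c.1 : I → G) : Filter.Germ (𝒰 : Filter I) G)
          = (((1 : I → G)) : Filter.Germ (𝒰 : Filter I) G) := by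
        rw [Filter.Germ.coe_one, hgermeq]
        intro hcon
        exact h1 (hinj (by rw [hcon, map_one]))
      have h3 : ∀ᶠ i in (𝒰 : Filter I), ¬ liftP c.1 i = 1 := by
        rw [Ultrafilter.eventually_not]
        intro hcon
        exact h2 (Filter.Germ.coe_eq.2 hcon)
      filter_upwards [h3] with i hi
      exact ⟨fun htt => by simp_all, fun _ => by rw [← hpt]; exact hi⟩
  obtain ⟨i, hi⟩ := hev.exists
  refine ⟨fun j => ((b' j i : G) : H), fun j => (b' j i).2, ?_⟩
  intro c hc
  have hic := hi c hc
  have hGH : FreeGroup.lift (Sum.elim (fun j => ((a j : H))) (fun j => ((b' j i : G) : H))) c.1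
      = ((liftG i c.1 : G) : H) := by
    have h0 := liftComp G.subtype (Sum.elim a (fun j => b' j i)) c.1
    simp only [Subgroup.coe_subtype] at h0
    have hfun : (fun x => ((Sum.elim a (fun j => b' j i) x : G) : H))
        = Sum.elim (fun j => ((a j : H))) (fun j => ((b' j i : G) : H)) := by
      funext x; cases x <;> rfl
    rw [hliftG, ← hfun]
    exact h0.symm
  constructor
  · intro h
    rw [hGH, hic.1 h, OneMemClass.coe_one]
  · intro h
    rw [hGH]
    intro hcon
    exact hic.2 h (Subtype.ext hcon)

/-- `G ≤ H` is existentially closed in `H` iff `H` embeds into an ultrapower of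
`G` in such a way that the restriction of the embedding to `G` is the diagonal
embedding. -/
theorem stmt13 {H : Type u} [Group H] (G : Subgroup H) :
    (∀ (k n : ℕ) (S : List (FreeGroup (Fin k ⊕ Fin n) × Bool))
        (a : Fin k → G),
        (∃ b : Fin n → H, SysCHolds S (fun j => (a j : H)) b) →
        ∃ b : Fin n → H, (∀ j, b j ∈ G) ∧ SysCHolds S (fun j => (a j : H)) b) ↔
      ∃ (I : Type u) (𝒰 : Ultrafilter I)
        (φ : H →* Filter.Germ (𝒰 : Filter I) G),
        Function.Injective φ ∧
        ∀ g : G, φ (g : H) = (↑g : Filter.Germ (𝒰 : Filter I) G) := by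
  exact ⟨fun hec => stmt13_fwd G hec, fun h => stmt13_rev G h⟩
end

section
/- A group G satisfies no nontrivial group law if and only if the free group F₂ on two generators embeds into some (equivalently, every) ultrapower of G with respect to a nonprincipal ultrafilter on ℕ. -/
open FreeGroup List

namespace Stmt15Aux

variable {α : Type*} [DecidableEq α]

def R (p q : α × Bool) : Prop := ¬(p.1 = q.1 ∧ p.2 = !q.2)

theorem reduce_eq_self_of_chain' {L : List (α × Bool)} (h : List.Chain' R L) :
    FreeGroup.reduce L = L := by
  induction L with
  | nil => rfl
  | cons x L ih =>
    rw [List.Chain', List.isChain_cons] at h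
    rw [FreeGroup.reduce.cons, ih h.2]
    cases L with
    | nil => rfl
    | cons y t =>
      have := h.1 y (by simp)
      simp only [R] at this
      simp [this]

theorem chain'_reduce (L : List (α × Bool)) : List.Chain' R (FreeGroup.reduce L) := by
  induction L with
  | nil => exact List.isChain_nil
  | cons x L ih =>
    rw [FreeGroup.reduce.cons]
    rcases h : FreeGroup.reduce L with _ | ⟨y, t⟩
    · exact List.isChain_singleton _
    · rw [h] at ih
      by_cases hc : x.1 = y.1 ∧ x.2 = !y.2
      · simp only [hc, and_self, if_true]
        exact ih.tail
      · simp only [hc, if_false]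
        exact List.isChain_cons.2 ⟨fun z hz => by simp at hz; subst hz; exact hc, ih⟩

theorem chain'_toWord (g : FreeGroup α) : List.Chain' R g.toWord := by
  rw [← FreeGroup.reduce_toWord]; exact chain'_reduce _

theorem toWord_mk_of_chain' {L : List (α × Bool)} (h : List.Chain' R L) :
    (FreeGroup.mk L).toWord = L := by
  rw [FreeGroup.toWord_mk, reduce_eq_self_of_chain' h]

/-! Ping pong in `FreeGroup (Fin 2)` -/

/-- the generator `a` -/
def A : FreeGroup (Fin 2) := FreeGroup.of 0

/-- prefix words -/
def P (i : ℕ) (t : Bool) : List (Fin 2 × Bool) :=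
  List.replicate (i + 1) ((0 : Fin 2), true) ++ [((1 : Fin 2), t)]

theorem chain'_P_append (i : ℕ) (t : Bool) {L : List (Fin 2 × Bool)}
    (hL : List.Chain' R L) (hhd : ∀ q ∈ L.head?, ¬(q.1 = 1 ∧ (t : Bool) = !q.2)) :
    List.Chain' R (P i t ++ L) := by
  have hrep : ∀ k, List.Chain' R (List.replicate k ((0 : Fin 2), true)) := by
    intro k
    induction k with
    | zero => exact List.isChain_nil
    | succ k ih =>
      rw [List.replicate_succ]
      refine List.isChain_cons.2 ⟨?_, ih⟩
      intro y hy
      cases k with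
      | zero => simp at hy
      | succ k =>
        rw [List.replicate_succ] at hy
        simp at hy
        subst hy
        simp [R]
  rw [P, List.append_assoc]
  apply List.IsChain.append (hrep _)
  · refine List.isChain_cons.2 ⟨?_, hL⟩
    intro q hq
    have := hhd q hq
    simp only [R]
    rintro ⟨h1, h2⟩
    exact this ⟨h1.symm, h2⟩
  · intro p hp q hq
    have hp' : p = ((0 : Fin 2), true) := by
      rcases List.mem_getLast?_eq_getLast hp with ⟨h, hh⟩
      have := List.getLast_mem h
      rw [← hh] at this
      simpa using (List.eq_of_mem_replicate this)
    have hq' : q = ((1 : Fin 2), t) := by simpa using hq.symm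
    subst hp' hq'
    simp [R]


theorem mk_P_mul (i : ℕ) (t : Bool) (h : FreeGroup (Fin 2)) :
    A ^ (i + 1) * FreeGroup.mk [((1 : Fin 2), t)] * h = FreeGroup.mk (P i t ++ h.toWord) := by
  conv_lhs => rw [← FreeGroup.mk_toWord (x := h)]
  have hA : A ^ (i + 1) = FreeGroup.mk (List.replicate (i + 1) ((0 : Fin 2), true)) := by
    rw [← FreeGroup.mk_toWord (x := A ^ (i+1)), A, FreeGroup.toWord_of_pow]
  rw [hA, FreeGroup.mul_mk, FreeGroup.mul_mk, P, List.append_assoc]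

/-- Key computation: if `h` does not start with `(1, !t)` then
`a^(i+1) * (1,t) * h` has reduced word `P i t ++ h.toWord`. -/
theorem toWord_P_mul (i : ℕ) (t : Bool) (h : FreeGroup (Fin 2))
    (hh : h.toWord.head? ≠ some ((1 : Fin 2), !t)) :
    (A ^ (i + 1) * FreeGroup.mk [((1 : Fin 2), t)] * h).toWord = P i t ++ h.toWord := by
  rw [mk_P_mul]
  apply toWord_mk_of_chain'
  apply chain'_P_append i t (chain'_toWord h)
  intro q hq
  rintro ⟨h1, h2⟩
  apply hh
  rcases q with ⟨q1, q2⟩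
  simp only at h1 h2
  subst h1
  subst h2
  rw [Option.mem_def] at hq
  simpa using hq

/-- The ping pong sets -/
def XS (i : ℕ) : Set (FreeGroup (Fin 2)) := {g | P i true <+: g.toWord}

def YS (i : ℕ) : Set (FreeGroup (Fin 2)) := {g | P i false <+: g.toWord}

/-- the free generators `x i = a^(i+1) b a^-(i+1)` -/
def xg (i : ℕ) : FreeGroup (Fin 2) :=
  A ^ (i + 1) * FreeGroup.of 1 * (A ^ (i + 1))⁻¹

theorem of_one_eq_mk : (FreeGroup.of (1 : Fin 2)) = FreeGroup.mk [((1 : Fin 2), true)] := rfl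

theorem mk_one_false_eq_inv :
    FreeGroup.mk [((1 : Fin 2), false)] = (FreeGroup.of (1 : Fin 2))⁻¹ := by
  rw [eq_inv_iff_mul_eq_one, of_one_eq_mk, FreeGroup.mul_mk]
  have : FreeGroup.reduce [((1 : Fin 2), false), ((1 : Fin 2), true)] = [] := by
    simp [FreeGroup.reduce]
  have h0 : ([((1 : Fin 2), false)] ++ [((1 : Fin 2), true)])
      = [((1 : Fin 2), false), ((1 : Fin 2), true)] := rfl
  rw [h0, ← FreeGroup.reduce.self (L := [((1 : Fin 2), false), ((1 : Fin 2), true)]), this]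
  rfl

/-- main dynamics lemma -/
theorem pong (i : ℕ) (t : Bool) (g : FreeGroup (Fin 2))
    (hg : ¬ P i (!t) <+: g.toWord) :
    P i t <+: ((A ^ (i + 1) * FreeGroup.mk [((1 : Fin 2), t)] * (A ^ (i + 1))⁻¹) * g).toWord := by
  set h := (A ^ (i + 1))⁻¹ * g with hh
  have hkey : h.toWord.head? ≠ some ((1 : Fin 2), !t) := by
    intro hcon
    apply hg
    have hcons : h.toWord = ((1 : Fin 2), !t) :: h.toWord.tail := by
      cases hw : h.toWord with
      | nil => rw [hw] at hcon; simp at hcon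
      | cons y l => rw [hw] at hcon; simp at hcon; rw [hcon]; simp
    have hchain : List.Chain' R (((1 : Fin 2), !t) :: h.toWord.tail) := by
      rw [← hcons]; exact chain'_toWord h
    have hgeq : g = FreeGroup.mk (P i (!t) ++ h.toWord.tail) := by
      have : g = A ^ (i + 1) * FreeGroup.mk [((1 : Fin 2), !t)] * FreeGroup.mk h.toWord.tail := by
        rw [mul_assoc, FreeGroup.mul_mk, List.singleton_append, ← hcons, FreeGroup.mk_toWord]
        rw [hh]
        group
      rw [this, mk_P_mul, toWord_mk_of_chain' ((chain'_toWord h).tail)]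
    rw [hgeq]
    rw [toWord_mk_of_chain']
    · exact ⟨_, rfl⟩
    · apply chain'_P_append _ _ ((chain'_toWord h).tail)
      intro q hq
      rintro ⟨h1, h2⟩
      have hch := hchain
      rw [List.Chain', List.isChain_cons] at hch
      have := hch.1 q hq
      simp only [R] at this
      apply this
      rcases q with ⟨q1, q2⟩
      simp only at h1 h2 ⊢
      exact ⟨h1.symm, h2⟩
  have : (A ^ (i + 1) * FreeGroup.mk [((1 : Fin 2), t)] * (A ^ (i + 1))⁻¹) * g
      = A ^ (i + 1) * FreeGroup.mk [((1 : Fin 2), t)] * h := by rw [hh]; group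
  rw [this, toWord_P_mul i t h hkey]
  exact ⟨_, rfl⟩


theorem P_length (i : ℕ) (t : Bool) : (P i t).length = i + 2 := by simp [P]

theorem P_prefix_P {i j : ℕ} {t s : Bool} (h : P i t <+: P j s) : i = j ∧ t = s := by
  have hlen : i + 2 ≤ j + 2 := by
    have := h.length_le
    rwa [P_length, P_length] at this
  have hij : i ≤ j := by omega
  have h1 : (P i t)[i + 1]'(by rw [P_length]; omega) = ((1 : Fin 2), t) := by
    simp only [P]
    rw [List.getElem_append_right (by simp)]
    simp
  have h2 := h.getElem (i := i + 1) (by rw [P_length]; omega)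
  rw [h1] at h2
  rcases Nat.lt_or_ge (i + 1) (j + 1) with hlt | hge
  · exfalso
    simp only [P] at h2
    rw [List.getElem_append_left (by simpa using hlt)] at h2
    simp at h2
  · have hieq : i = j := by omega
    subst hieq
    simp only [P] at h2
    rw [List.getElem_append_right (by simp)] at h2
    simp at h2
    exact ⟨rfl, h2⟩

theorem P_not_both {i j : ℕ} {t s : Bool} (hne : ¬(i = j ∧ t = s))
    {L : List (Fin 2 × Bool)} (h1 : P i t <+: L) (h2 : P j s <+: L) : False := by
  rcases List.prefix_or_prefix_of_prefix h1 h2 with hp | hp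
  · exact hne (P_prefix_P hp)
  · rcases P_prefix_P hp with ⟨rfl, rfl⟩
    exact hne ⟨rfl, rfl⟩


theorem xg_eq (i : ℕ) : xg i = A ^ (i + 1) * FreeGroup.mk [((1 : Fin 2), true)] * (A ^ (i + 1))⁻¹ := rfl

theorem xg_inv_eq (i : ℕ) :
    (xg i)⁻¹ = A ^ (i + 1) * FreeGroup.mk [((1 : Fin 2), false)] * (A ^ (i + 1))⁻¹ := by
  rw [mk_one_false_eq_inv, xg]
  group

theorem xg_free : Function.Injective (FreeGroup.lift xg) := by
  apply FreeGroup.injective_lift_of_ping_pong xg XS YS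
  · intro i
    refine ⟨A ^ (i + 1) * FreeGroup.mk [((1 : Fin 2), true)] * 1, ?_⟩
    show P i true <+: _
    rw [toWord_P_mul i true 1 (by simp)]
    exact ⟨_, rfl⟩
  · intro i j hij
    show _root_.Disjoint (XS i) (XS j)
    rw [Set.disjoint_left]
    intro g hgi hgj
    exact P_not_both (by simp [hij]) hgi hgj
  · intro i j hij
    show _root_.Disjoint (YS i) (YS j)
    rw [Set.disjoint_left]
    intro g hgi hgj
    exact P_not_both (by simp [hij]) hgi hgj
  · intro i j
    rw [Set.disjoint_left]
    intro g hgi hgj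
    exact P_not_both (by simp) hgi hgj
  · intro i z hz
    rw [Set.mem_smul_set] at hz
    obtain ⟨g, hg, rfl⟩ := hz
    rw [smul_eq_mul]
    show P i true <+: _
    rw [xg_eq]
    exact pong i true g (by simpa [YS] using hg)
  · intro i z hz
    rw [Set.mem_smul_set] at hz
    obtain ⟨g, hg, rfl⟩ := hz
    rw [smul_eq_mul]
    show P i false <+: _
    rw [Pi.inv_apply, xg_inv_eq]
    exact pong i false g (by simpa [XS] using hg)


section Letters

variable {β : Type*} [DecidableEq β]

theorem mem_toWord_mul {g h : FreeGroup β} {p : β × Bool} (hp : p ∈ (g * h).toWord) :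
    p ∈ g.toWord ∨ p ∈ h.toWord := by
  have := (FreeGroup.toWord_mul_sublist g h).subset hp
  simpa using this

theorem fst_mem_toWord_inv {g : FreeGroup β} {p : β × Bool} (hp : p ∈ g⁻¹.toWord) :
    ∃ b, (p.1, b) ∈ g.toWord := by
  rw [FreeGroup.toWord_inv, FreeGroup.invRev] at hp
  simp only [List.mem_reverse, List.mem_map] at hp
  obtain ⟨q, hq, hqe⟩ := hp
  exact ⟨q.2, by rw [← hqe]; exact hq⟩

theorem fst_mem_toWord_map {γ : Type*} [DecidableEq γ] (f : β → γ) {g : FreeGroup β}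
    {p : γ × Bool} (hp : p ∈ (FreeGroup.map f g).toWord) :
    ∃ q ∈ g.toWord, p.1 = f q.1 := by
  have h1 : FreeGroup.map f g = FreeGroup.mk (g.toWord.map fun x => (f x.1, x.2)) := by
    conv_lhs => rw [← FreeGroup.mk_toWord (x := g)]
    rw [FreeGroup.map.mk]
  rw [h1, FreeGroup.toWord_mk] at hp
  have := (FreeGroup.reduce.red.sublist).subset hp
  simp only [List.mem_map] at this
  obtain ⟨q, hq, hqe⟩ := this
  exact ⟨q, hq, by rw [← hqe]⟩

theorem mem_toWord_of {a : β} {p : β × Bool} (hp : p ∈ (FreeGroup.of a).toWord) :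
    p = (a, true) := by
  rw [FreeGroup.toWord_of] at hp
  simpa using hp

end Letters

/-! The iterated commutator words in `FreeGroup ℕ` -/

def Tw (v : ℕ → FreeGroup ℕ) (n : ℕ) : FreeGroup ℕ :=
  FreeGroup.of (n + 2) * v (n + 1) * (FreeGroup.of (n + 2))⁻¹

def Cw (v : ℕ → FreeGroup ℕ) : ℕ → FreeGroup ℕ
  | 0 => v 0
  | n + 1 => Cw v n * Tw v n * (Cw v n)⁻¹ * (Tw v n)⁻¹

theorem comm_factor_ne_one {H : Type*} [Group H] {p q : H}
    (h : p * q * p⁻¹ * q⁻¹ ≠ 1) : p ≠ 1 ∧ q ≠ 1 := by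
  constructor
  · rintro rfl; simp at h
  · rintro rfl; simp at h

/-- heads lemma: words of products with fresh conjugator -/
theorem key_comm_ne_one {c V : FreeGroup ℕ} {k : ℕ} (hc : c ≠ 1) (hV : V ≠ 1)
    (hcl : ∀ p ∈ c.toWord, p.1 ≠ k) (hVl : ∀ p ∈ V.toWord, p.1 ≠ k) :
    c * (FreeGroup.of k * V * (FreeGroup.of k)⁻¹) ≠
      (FreeGroup.of k * V * (FreeGroup.of k)⁻¹) * c := by
  have hofk : (FreeGroup.of k : FreeGroup ℕ) = FreeGroup.mk [(k, true)] := rfl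
  have hofk' : (FreeGroup.of k : FreeGroup ℕ)⁻¹ = FreeGroup.mk [(k, false)] := by
    rw [hofk, FreeGroup.inv_mk]
    rfl
  have hU : c = FreeGroup.mk c.toWord := (FreeGroup.mk_toWord).symm
  have hW : V = FreeGroup.mk V.toWord := (FreeGroup.mk_toWord).symm
  have hUne : c.toWord ≠ [] := fun h => hc (FreeGroup.toWord_eq_nil_iff.1 h)
  have hWne : V.toWord ≠ [] := fun h => hV (FreeGroup.toWord_eq_nil_iff.1 h)
  have hchainU : List.Chain' R c.toWord := chain'_toWord c
  have hchainW : List.Chain' R V.toWord := chain'_toWord V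
  -- chain for LHS list
  have chainL : List.Chain' R (c.toWord ++ (k, true) :: (V.toWord ++ [(k, false)])) := by
    apply List.IsChain.append hchainU
    · apply List.isChain_cons.2
      refine ⟨?_, List.IsChain.append hchainW (by simp) ?_⟩
      · intro y hy
        rw [List.head?_append_of_ne_nil _ hWne] at hy
        have hy' := List.mem_of_mem_head? hy
        exact fun hcon => hVl y hy' hcon.1.symm
      · intro p hp q hq
        have hp' := List.mem_of_mem_getLast? hp
        have hq' : q = (k, false) := by simpa using hq.symm
        subst hq'
        exact fun hcon => hVl p hp' hcon.1
    · intro p hp q hq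
      have hp' := List.mem_of_mem_getLast? hp
      have hq' : q = (k, true) := by simpa using hq.symm
      subst hq'
      exact fun hcon => hcl p hp' hcon.1
  -- chain for RHS list
  have chainR : List.Chain' R ((k, true) :: (V.toWord ++ (k, false) :: c.toWord)) := by
    apply List.isChain_cons.2
    refine ⟨?_, List.IsChain.append hchainW ?_ ?_⟩
    · intro y hy
      rw [List.head?_append_of_ne_nil _ hWne] at hy
      have hy' := List.mem_of_mem_head? hy
      exact fun hcon => hVl y hy' hcon.1.symm
    · apply List.isChain_cons.2
      refine ⟨?_, hchainU⟩
      intro y hy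
      have hy' := List.mem_of_mem_head? hy
      exact fun hcon => hcl y hy' hcon.1.symm
    · intro p hp q hq
      have hp' := List.mem_of_mem_getLast? hp
      have hq' : q = (k, false) := by simpa using hq.symm
      subst hq'
      exact fun hcon => hVl p hp' hcon.1
  intro heq
  have hL : (c * (FreeGroup.of k * V * (FreeGroup.of k)⁻¹)).toWord
      = c.toWord ++ (k, true) :: (V.toWord ++ [(k, false)]) := by
    have h1 : c * (FreeGroup.of k * V * (FreeGroup.of k)⁻¹)
        = FreeGroup.mk (c.toWord ++ (k, true) :: (V.toWord ++ [(k, false)])) := by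
      rw [hofk', hofk]
      conv_lhs => rw [hU, hW]
      rw [FreeGroup.mul_mk, FreeGroup.mul_mk, FreeGroup.mul_mk]
      congr 1
      try simp
    rw [h1]
    exact toWord_mk_of_chain' chainL
  have hR : ((FreeGroup.of k * V * (FreeGroup.of k)⁻¹) * c).toWord
      = (k, true) :: (V.toWord ++ (k, false) :: c.toWord) := by
    have h1 : (FreeGroup.of k * V * (FreeGroup.of k)⁻¹) * c
        = FreeGroup.mk ((k, true) :: (V.toWord ++ (k, false) :: c.toWord)) := by
      rw [hofk', hofk]
      conv_lhs => rw [hU, hW]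
      rw [FreeGroup.mul_mk, FreeGroup.mul_mk, FreeGroup.mul_mk]
      congr 1
      try simp
    rw [h1]
    exact toWord_mk_of_chain' chainR
  rw [heq, hR] at hL
  -- compare heads
  have := congrArg List.head? hL
  rw [List.head?_cons, List.head?_append_of_ne_nil _ hUne] at this
  rcases hU' : c.toWord with _ | ⟨u0, us⟩
  · exact hUne hU'
  · rw [hU'] at this
    simp at this
    have hu0 : u0 ∈ c.toWord := by rw [hU']; simp
    exact hcl u0 hu0 (by rw [← this])


theorem Tw_letters (v : ℕ → FreeGroup ℕ) (hv2 : ∀ i, ∀ p ∈ (v i).toWord, p.1 < 2) (n : ℕ) :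
    ∀ p ∈ (Tw v n).toWord, p.1 < n + 3 := by
  intro p hp
  rcases mem_toWord_mul hp with h | h
  · rcases mem_toWord_mul h with h' | h'
    · rw [mem_toWord_of h']
      omega
    · have := hv2 (n + 1) p h'
      omega
  · obtain ⟨b, hb⟩ := fst_mem_toWord_inv h
    have := mem_toWord_of hb
    have : p.1 = n + 2 := congrArg Prod.fst this
    omega

theorem Cw_spec (v : ℕ → FreeGroup ℕ) (hv1 : ∀ i, v i ≠ 1)
    (hv2 : ∀ i, ∀ p ∈ (v i).toWord, p.1 < 2) :
    ∀ n, Cw v n ≠ 1 ∧ ∀ p ∈ (Cw v n).toWord, p.1 < n + 2 := by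
  intro n
  induction n with
  | zero =>
    refine ⟨hv1 0, fun p hp => ?_⟩
    have := hv2 0 p hp
    omega
  | succ n ih =>
    obtain ⟨hne, hlet⟩ := ih
    have hkey := key_comm_ne_one (c := Cw v n) (V := v (n + 1)) (k := n + 2) hne (hv1 _)
      (fun p hp => by have := hlet p hp; omega)
      (fun p hp => by have := hv2 (n + 1) p hp; omega)
    have hTl := Tw_letters v hv2 n
    constructor
    · show Cw v n * Tw v n * (Cw v n)⁻¹ * (Tw v n)⁻¹ ≠ 1
      intro hcon
      apply hkey
      have h2 : Cw v n * Tw v n * (Cw v n)⁻¹ = Tw v n := by rwa [mul_inv_eq_one] at hcon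
      exact mul_inv_eq_iff_eq_mul.1 h2
    · show ∀ p ∈ (Cw v n * Tw v n * (Cw v n)⁻¹ * (Tw v n)⁻¹).toWord, p.1 < n + 3
      intro p hp
      rcases mem_toWord_mul hp with h | h
      · rcases mem_toWord_mul h with h' | h'
        · rcases mem_toWord_mul h' with h'' | h''
          · have := hlet p h''; omega
          · exact hTl p h''
        · obtain ⟨b, hb⟩ := fst_mem_toWord_inv h'
          have := hlet (p.1, b) hb
          simpa using by omega
      · obtain ⟨b, hb⟩ := fst_mem_toWord_inv h
        exact hTl (p.1, b) hb

theorem Cw_extract {H : Type*} [Group H] (f : FreeGroup ℕ →* H) (v : ℕ → FreeGroup ℕ) :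
    ∀ n, f (Cw v n) ≠ 1 → ∀ i, i ≤ n → f (v i) ≠ 1 := by
  intro n
  induction n with
  | zero =>
    intro h i hi
    have : i = 0 := by omega
    subst this
    exact h
  | succ n ih =>
    intro h i hi
    have hmap : f (Cw v (n + 1))
        = f (Cw v n) * f (Tw v n) * (f (Cw v n))⁻¹ * (f (Tw v n))⁻¹ := by
      show f (Cw v n * Tw v n * (Cw v n)⁻¹ * (Tw v n)⁻¹) = _
      simp
    rw [hmap] at h
    obtain ⟨h1, h2⟩ := comm_factor_ne_one h
    rcases Nat.lt_or_ge i (n + 1) with hlt | hge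
    · exact ih h1 i (by omega)
    · have : i = n + 1 := by omega
      subst this
      intro hcon
      apply h2
      show f (FreeGroup.of (n + 2) * v (n + 1) * (FreeGroup.of (n + 2))⁻¹) = 1
      simp [hcon]

theorem lift_comp_map {β γ : Type*} {H : Type*} [Group H] (f : β → γ) (a : γ → H) :
    (FreeGroup.lift a).comp (FreeGroup.map f) = FreeGroup.lift (a ∘ f) := by
  apply FreeGroup.ext_hom
  intro x
  simp

theorem map_congr {β γ : Type*} [DecidableEq β] (f g : β → γ) (x : FreeGroup β)
    (h : ∀ p ∈ x.toWord, f p.1 = g p.1) : FreeGroup.map f x = FreeGroup.map g x := by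
  conv_lhs => rw [← FreeGroup.mk_toWord (x := x)]
  conv_rhs => rw [← FreeGroup.mk_toWord (x := x)]
  rw [FreeGroup.map.mk, FreeGroup.map.mk]
  congr 1
  apply List.map_congr_left
  intro p hp
  rw [h p hp]

theorem map_val_ne_one {w : FreeGroup (Fin 2)} (hw : w ≠ 1) :
    FreeGroup.map (Fin.val : Fin 2 → ℕ) w ≠ 1 := by
  intro hcon
  apply hw
  have := congrArg (FreeGroup.map (fun m : ℕ => (⟨m % 2, by omega⟩ : Fin 2))) hcon
  rw [FreeGroup.map.comp, MonoidHom.map_one] at this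
  rw [← this]
  have heq : ((fun m : ℕ => (⟨m % 2, by omega⟩ : Fin 2)) ∘ (Fin.val : Fin 2 → ℕ)) = id := by
    funext i
    have hi := i.isLt
    apply Fin.ext
    simp only [Function.comp_apply, id_eq]
    omega
  rw [heq]
  exact (FreeGroup.map.id w).symm

/-- Simultaneous violation of finitely many nontrivial 2-variable words. -/
theorem simultaneous {G : Type*} [Group G]
    (hG : ∀ (n : ℕ) (w : FreeGroup (Fin n)), w ≠ 1 → ∃ a : Fin n → G, FreeGroup.lift a w ≠ 1)
    (v : ℕ → FreeGroup (Fin 2)) (hv : ∀ i, v i ≠ 1) (n : ℕ) :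
    ∃ g : Fin 2 → G, ∀ i ≤ n, FreeGroup.lift g (v i) ≠ 1 := by
  set V : ℕ → FreeGroup ℕ := fun i => FreeGroup.map (Fin.val : Fin 2 → ℕ) (v i) with hV
  have hV1 : ∀ i, V i ≠ 1 := fun i => map_val_ne_one (hv i)
  have hV2 : ∀ i, ∀ p ∈ (V i).toWord, p.1 < 2 := by
    intro i p hp
    obtain ⟨q, _, hq⟩ := fst_mem_toWord_map _ hp
    rw [hq]
    exact q.1.isLt
  obtain ⟨hCne, hClet⟩ := Cw_spec V hV1 hV2 n
  set toF : ℕ → Fin (n + 3) := fun m => ⟨min m (n + 2), by omega⟩ with htoF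
  have hw' : FreeGroup.map toF (Cw V n) ≠ 1 := by
    intro hcon
    apply hCne
    have := congrArg (FreeGroup.map (Fin.val : Fin (n + 3) → ℕ)) hcon
    rw [FreeGroup.map.comp, MonoidHom.map_one] at this
    rw [← FreeGroup.map.id (Cw V n), ← this]
    apply map_congr
    intro p hp
    have := hClet p hp
    simp [htoF]
    omega
  obtain ⟨a, ha⟩ := hG (n + 3) (FreeGroup.map toF (Cw V n)) hw'
  have ha' : FreeGroup.lift (a ∘ toF) (Cw V n) ≠ 1 := by
    rw [← lift_comp_map toF a]
    exact ha
  refine ⟨fun j => a (toF j.val), fun i hi => ?_⟩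
  have hvio := Cw_extract (FreeGroup.lift (a ∘ toF)) V n ha' i hi
  have hcf := DFunLike.congr_fun (lift_comp_map (Fin.val : Fin 2 → ℕ) (a ∘ toF)) (v i)
  rw [MonoidHom.comp_apply] at hcf
  rw [hV] at hvio
  simp only at hvio
  rw [hcf] at hvio
  exact hvio


instance : Countable (FreeGroup (Fin 2)) :=
  Function.Injective.countable (FreeGroup.toWord_injective (α := Fin 2))

theorem map_val_ne_one' {n : ℕ} (hn : 0 < n) {w : FreeGroup (Fin n)} (hw : w ≠ 1) :
    FreeGroup.map (Fin.val : Fin n → ℕ) w ≠ 1 := by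
  intro hcon
  apply hw
  have := congrArg (FreeGroup.map (fun m : ℕ => (⟨m % n, Nat.mod_lt _ hn⟩ : Fin n))) hcon
  rw [FreeGroup.map.comp, MonoidHom.map_one] at this
  rw [← this]
  have heq : ((fun m : ℕ => (⟨m % n, Nat.mod_lt _ hn⟩ : Fin n)) ∘ (Fin.val : Fin n → ℕ)) = id := by
    funext i
    have hi := i.isLt
    apply Fin.ext
    simp only [Function.comp_apply, id_eq]
    exact Nat.mod_eq_of_lt hi
  rw [heq]
  exact (FreeGroup.map.id w).symm

theorem lift_pi_apply {ι : Type*} {H : Type*} [Group H] {X : Type*} (F : ι → X → H)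
    (w : FreeGroup ι) (x : X) :
    FreeGroup.lift F w x = FreeGroup.lift (fun i => F i x) w := by
  have h : (Pi.evalMonoidHom (fun _ : X => H) x).comp (FreeGroup.lift F)
      = FreeGroup.lift (fun i => F i x) := by
    apply FreeGroup.ext_hom
    intro i
    simp
  exact DFunLike.congr_fun h w

theorem freeGroup_fin_zero_eq_one (u : FreeGroup (Fin 0)) : u = 1 := by
  rw [← FreeGroup.toWord_eq_nil_iff]
  rw [List.eq_nil_iff_forall_not_mem]
  intro p hp
  exact p.1.elim0

end Stmt15Aux

/-- A group `G` satisfies no nontrivial law iff the free group `F₂` embeds into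
the ultrapower of `G` with respect to a nonprincipal ultrafilter on `ℕ`. -/
theorem stmt15 {G : Type*} [Group G]
    (𝒰 : Ultrafilter ℕ) (h𝒰 : (𝒰 : Filter ℕ) ≤ Filter.cofinite) :
    (∀ (n : ℕ) (w : FreeGroup (Fin n)), w ≠ 1 →
        ∃ a : Fin n → G, FreeGroup.lift a w ≠ 1) ↔
      ∃ φ : FreeGroup (Fin 2) →* Filter.Germ (𝒰 : Filter ℕ) G,
        Function.Injective φ := by
  constructor
  · -- forward: lawless implies embedding
    intro hG
    obtain ⟨e, he⟩ := exists_surjective_nat (FreeGroup (Fin 2))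
    set v : ℕ → FreeGroup (Fin 2) :=
      fun k => if e k = 1 then FreeGroup.of 0 else e k with hv
    have hv1 : ∀ k, v k ≠ 1 := by
      intro k
      rw [hv]
      simp only
      split
      · exact FreeGroup.of_ne_one 0
      · assumption
    have hsim := Stmt15Aux.simultaneous hG v hv1
    choose g hg using hsim
    set F : Fin 2 → ℕ → G := fun j m => g m j with hF
    refine ⟨(Filter.Germ.coeMulHom (𝒰 : Filter ℕ)).comp (FreeGroup.lift F), ?_⟩
    rw [injective_iff_map_eq_one]
    intro w hw1
    by_contra hwne
    obtain ⟨k, hk⟩ := he w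
    have hvk : v k = w := by rw [hv]; simp only; rw [if_neg (hk ▸ hwne), hk]
    -- the set where the law is violated
    have hbig : {m | k ≤ m} ∈ (𝒰 : Filter ℕ) := by
      apply h𝒰
      rw [Filter.mem_cofinite]
      have : {m | k ≤ m}ᶜ = {m | m < k} := by ext m; simp
      rw [this]
      exact Set.finite_lt_nat k
    have hone : FreeGroup.lift F w =ᶠ[(𝒰 : Filter ℕ)] 1 := by
      rw [← Filter.Germ.coe_eq]
      rw [Filter.Germ.coe_one]
      exact hw1
    have hmem : {m | FreeGroup.lift F w m = 1} ∈ (𝒰 : Filter ℕ) := hone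
    obtain ⟨m, hm1, hm2⟩ := Filter.nonempty_of_mem (Filter.inter_mem hmem hbig)
    have := hg m k hm2
    rw [hvk] at this
    apply this
    have := Stmt15Aux.lift_pi_apply F w m
    rw [← this]
    exact hm1
  · -- backward: embedding implies lawless
    rintro ⟨φ, hφ⟩ n w hw
    rcases Nat.eq_zero_or_pos n with rfl | hn
    · exact absurd (Stmt15Aux.freeGroup_fin_zero_eq_one w) hw
    set u : Fin n → FreeGroup (Fin 2) := fun i => Stmt15Aux.xg i.val with hu
    have hW : FreeGroup.lift u w ≠ 1 := by
      have h1 : FreeGroup.lift u w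
          = FreeGroup.lift Stmt15Aux.xg (FreeGroup.map (Fin.val : Fin n → ℕ) w) := by
        have := DFunLike.congr_fun
          (Stmt15Aux.lift_comp_map (Fin.val : Fin n → ℕ) Stmt15Aux.xg) w
        rw [MonoidHom.comp_apply] at this
        rw [this]
        rfl
      rw [h1]
      intro hcon
      apply Stmt15Aux.map_val_ne_one' hn hw
      apply Stmt15Aux.xg_free
      rw [hcon, MonoidHom.map_one]
    have hφW : φ (FreeGroup.lift u w) ≠ 1 := by
      intro hcon
      exact hW ((injective_iff_map_eq_one φ).1 hφ _ hcon)
    -- choose representatives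
    have hrep : ∀ i : Fin n, ∃ f : ℕ → G, (↑f : Filter.Germ (𝒰 : Filter ℕ) G) = φ (u i) :=
      fun i => Filter.Germ.inductionOn (φ (u i)) fun f => ⟨f, rfl⟩
    choose F hFr using hrep
    have hcomm : φ (FreeGroup.lift u w)
        = (↑(FreeGroup.lift F w) : Filter.Germ (𝒰 : Filter ℕ) G) := by
      have h1 : φ.comp (FreeGroup.lift u)
          = (Filter.Germ.coeMulHom (𝒰 : Filter ℕ)).comp (FreeGroup.lift F) := by
        apply FreeGroup.ext_hom
        intro i
        simp only [MonoidHom.comp_apply, FreeGroup.lift_apply_of]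
        exact (hFr i).symm
      have := DFunLike.congr_fun h1 w
      rw [MonoidHom.comp_apply, MonoidHom.comp_apply] at this
      exact this
    by_contra hcon
    push_neg at hcon
    apply hφW
    rw [hcomm, ← Filter.Germ.coe_one, Filter.Germ.coe_eq]
    apply Filter.Eventually.of_forall
    intro m
    have := hcon (fun i => F i m)
    rw [← Stmt15Aux.lift_pi_apply F w m] at this
    exact this
end

section
/- Let w be a group word and let 𝔊_w be the class of groups satisfying the law w = e. If every group in 𝔊_w that is amenable has all its ultrapowers amenable, then the class of amenable groups in 𝔊_w is closed under arbitrary ultraproducts. -/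
universe u

open scoped Classical in
/-- The Følner condition (amenability) for a discrete group. -/
def FolnerCond (G : Type u) [Group G] : Prop :=
  ∀ (F : Finset G) (ε : ℝ), 0 < ε → ∃ K : Finset G, K.Nonempty ∧
    ∀ g ∈ F, ((symmDiff (K.image fun x => g * x) K).card : ℝ) < ε * K.card

/-- `G` satisfies the law `w = e`. -/
def SatLaw {n : ℕ} (w : FreeGroup (Fin n)) (G : Type u) [Group G] : Prop :=
  ∀ a : Fin n → G, FreeGroup.lift a w = 1

open scoped Classical

lemma image_mul_symmDiff {G H : Type u} [Group G] [Group H] (φ : H →* G)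
    (hφ : Function.Injective φ) (K : Finset H) (h : H) :
    symmDiff ((K.image φ).image fun x => φ h * x) (K.image φ)
      = (symmDiff (K.image fun x => h * x) K).image φ := by
  rw [Finset.image_image]
  have h1 : ((fun x => φ h * x) ∘ φ) = φ ∘ (fun x => h * x) := by
    funext x; simp
  rw [h1, ← Finset.image_image, ← Finset.image_symmDiff _ _ hφ]

lemma folner_of_forall_range {G : Type u} [Group G]
    (h : ∀ F : Finset G, ∃ (H : Type u) (_ : Group H) (φ : H →* G),
      Function.Injective φ ∧ (∀ g ∈ F, g ∈ Set.range φ) ∧ FolnerCond H) :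
    FolnerCond G := by
  intro F ε hε
  obtain ⟨H, _, φ, hinj, hrange, hH⟩ := h F
  choose ρ hρ using hrange
  have hres := hH (F.attach.image fun x => ρ x.1 x.2) ε hε
  obtain ⟨K₀, hK₀ne, hK₀⟩ := hres
  refine ⟨K₀.image φ, hK₀ne.image _, ?_⟩
  intro g hg
  rw [← hρ g hg, image_mul_symmDiff φ hinj, Finset.card_image_of_injective _ hinj,
    Finset.card_image_of_injective _ hinj]
  exact hK₀ _ (Finset.mem_image.2 ⟨⟨g, hg⟩, Finset.mem_attach _ _, rfl⟩)

lemma FolnerCond.of_mulEquiv {G H : Type u} [Group G] [Group H] (e : H ≃* G)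
    (hH : FolnerCond H) : FolnerCond G :=
  folner_of_forall_range fun _ => ⟨H, inferInstance, e.toMonoidHom, e.injective,
    fun g _ => ⟨e.symm g, e.apply_symm_apply g⟩, hH⟩

lemma folner_of_subsingleton {G : Type u} [Group G] [Subsingleton G] : FolnerCond G := by
  intro F ε hε
  refine ⟨{1}, Finset.singleton_nonempty 1, ?_⟩
  intro g hg
  have h1 : ({1} : Finset G).image (fun x => g * x) = {1} := by
    simp [Subsingleton.elim (g * 1) 1]
  rw [h1, symmDiff_self]
  simpa using hε

lemma folner_prod {G H : Type u} [Group G] [Group H]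
    (hG : FolnerCond G) (hH : FolnerCond H) : FolnerCond (G × H) := by
  letI : DecidableEq (G × H) := fun a b => Classical.propDecidable (a = b)
  intro F ε hε
  obtain ⟨K₁, hK₁ne, hK₁⟩ := hG (F.image Prod.fst) (ε / 4) (by linarith)
  obtain ⟨K₂, hK₂ne, hK₂⟩ := hH (F.image Prod.snd) (ε / 4) (by linarith)
  refine ⟨K₁ ×ˢ K₂, hK₁ne.product hK₂ne, ?_⟩
  rintro ⟨g, h⟩ hgh
  set A := K₁.image fun x => g * x with hA
  set B := K₂.image fun x => h * x with hB
  have himg : (K₁ ×ˢ K₂).image (fun x => (g, h) * x) = A ×ˢ B := by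
    ext ⟨a, b⟩
    simp only [hA, hB, Finset.mem_image, Finset.mem_product, Prod.ext_iff, Prod.exists]
    constructor
    · rintro ⟨x, y, ⟨hx, hy⟩, rfl, rfl⟩
      exact ⟨⟨x, hx, rfl⟩, ⟨y, hy, rfl⟩⟩
    · rintro ⟨⟨x, hx, rfl⟩, ⟨y, hy, rfl⟩⟩
      exact ⟨x, y, ⟨hx, hy⟩, rfl, rfl⟩
  have hsub : symmDiff (A ×ˢ B) (K₁ ×ˢ K₂) ⊆
      (symmDiff A K₁) ×ˢ (B ∪ K₂) ∪ (A ∪ K₁) ×ˢ (symmDiff B K₂) := by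
    intro ⟨a, b⟩ hab
    simp only [Finset.mem_symmDiff, Finset.mem_product, Finset.mem_union] at hab ⊢
    tauto
  have hcard : (symmDiff (A ×ˢ B) (K₁ ×ˢ K₂)).card ≤
      (symmDiff A K₁).card * (B ∪ K₂).card + (A ∪ K₁).card * (symmDiff B K₂).card := by
    calc (symmDiff (A ×ˢ B) (K₁ ×ˢ K₂)).card
        ≤ ((symmDiff A K₁) ×ˢ (B ∪ K₂) ∪ (A ∪ K₁) ×ˢ (symmDiff B K₂)).card :=
          Finset.card_le_card hsub
      _ ≤ _ := by
          refine (Finset.card_union_le _ _).trans ?_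
          rw [Finset.card_product, Finset.card_product]
  have hAcard : A.card = K₁.card := Finset.card_image_of_injective _ (mul_right_injective g)
  have hBcard : B.card = K₂.card := Finset.card_image_of_injective _ (mul_right_injective h)
  have hBK : (B ∪ K₂).card ≤ 2 * K₂.card := by
    refine (Finset.card_union_le _ _).trans ?_; omega
  have hAK : (A ∪ K₁).card ≤ 2 * K₁.card := by
    refine (Finset.card_union_le _ _).trans ?_; omega
  have h1 : ((symmDiff A K₁).card : ℝ) < ε / 4 * K₁.card :=
    hK₁ g (Finset.mem_image_of_mem _ hgh)
  have h2 : ((symmDiff B K₂).card : ℝ) < ε / 4 * K₂.card :=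
    hK₂ h (Finset.mem_image_of_mem _ hgh)
  have hK₁pos : (0 : ℝ) < K₁.card := by exact_mod_cast hK₁ne.card_pos
  have hK₂pos : (0 : ℝ) < K₂.card := by exact_mod_cast hK₂ne.card_pos
  rw [himg, Finset.card_product]
  have hcR : ((symmDiff (A ×ˢ B) (K₁ ×ˢ K₂)).card : ℝ) ≤
      ((symmDiff A K₁).card : ℝ) * (2 * (K₂.card : ℝ)) + (2 * (K₁.card : ℝ)) * ((symmDiff B K₂).card : ℝ) := by
    have := hcard
    have hb : ((B ∪ K₂).card : ℝ) ≤ 2 * (K₂.card : ℝ) := by exact_mod_cast hBK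
    have ha : ((A ∪ K₁).card : ℝ) ≤ 2 * (K₁.card : ℝ) := by exact_mod_cast hAK
    calc ((symmDiff (A ×ˢ B) (K₁ ×ˢ K₂)).card : ℝ)
        ≤ ((symmDiff A K₁).card : ℝ) * ((B ∪ K₂).card : ℝ) + ((A ∪ K₁).card : ℝ) * ((symmDiff B K₂).card : ℝ) := by
          exact_mod_cast hcard
      _ ≤ _ := by
          have n1 : (0:ℝ) ≤ ((symmDiff A K₁).card : ℝ) := Nat.cast_nonneg _
          have n2 : (0:ℝ) ≤ ((symmDiff B K₂).card : ℝ) := Nat.cast_nonneg _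
          exact add_le_add (mul_le_mul_of_nonneg_left hb n1)
            (mul_le_mul_of_nonneg_right ha n2)
  refine hcR.trans_lt ?_
  push_cast
  have n1 : (0:ℝ) ≤ ((symmDiff A K₁).card : ℝ) := Nat.cast_nonneg _
  have n2 : (0:ℝ) ≤ ((symmDiff B K₂).card : ℝ) := Nat.cast_nonneg _
  nlinarith [n1, n2, h1, h2, hK₁pos, hK₂pos]

def piCongrLeftMulAux {α β : Type u} (e : α ≃ β) (G : β → Type u) [∀ b, Group (G b)] :
    (∀ b, G b) ≃* (∀ a, G (e a)) :=
  { Equiv.piCongrLeft' G e.symm with map_mul' := fun _ _ => rfl }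

def optionProdMulEquiv {α : Type u} (G : Option α → Type u) [∀ o, Group (G o)] :
    (G none × ∀ a, G (some a)) ≃* (∀ o, G o) where
  toFun p o := match o with | none => p.1 | some a => p.2 a
  invFun f := (f none, fun a => f (some a))
  left_inv p := rfl
  right_inv f := funext fun o => by cases o <;> rfl
  map_mul' p q := funext fun o => by cases o <;> rfl

lemma folner_pi (J : Type u) [Fintype J] (G : J → Type u) [∀ j, Group (G j)]
    (hG : ∀ j, FolnerCond (G j)) : FolnerCond (∀ j, G j) := by
  revert G
  refine Fintype.induction_empty_option
    (P := fun (J : Type u) [Fintype J] => ∀ (G : J → Type u) [∀ j, Group (G j)],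
      (∀ j, FolnerCond (G j)) → FolnerCond (∀ j, G j)) ?_ ?_ ?_ J
  · intro α β _ e ih G _ hG
    have h1 : FolnerCond (∀ a, G (e a)) := ih (fun a => G (e a)) (fun a => hG (e a))
    exact h1.of_mulEquiv (piCongrLeftMulAux e G).symm
  · intro G _ _
    have : Subsingleton (∀ j : PEmpty.{u+1}, G j) := ⟨fun f g => funext fun j => j.elim⟩
    exact folner_of_subsingleton
  · intro α _ ih G _ hG
    have h1 : FolnerCond (G none × ∀ a, G (some a)) :=
      folner_prod (hG none) (ih (fun a => G (some a)) (fun a => hG (some a)))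
    exact h1.of_mulEquiv (optionProdMulEquiv G)

lemma filter_symmDiff' {α : Type*} [DecidableEq α] (s t : Finset α) (p : α → Prop)
    [DecidablePred p] :
    (symmDiff s t).filter p = symmDiff (s.filter p) (t.filter p) := by
  ext x
  simp only [Finset.mem_filter, Finset.mem_symmDiff]
  tauto

lemma sum_fiber_card_le {α β : Type*} (s : Finset α) (q : α → β) (C : Finset β)
    {D : (c : β) → (x : α) → Decidable (q x = c)} :
    (∑ c ∈ C, (@Finset.filter _ (fun x => q x = c) (D c) s).card) ≤ s.card := by
  have hD : D = fun c x => Classical.propDecidable _ := Subsingleton.elim _ _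
  subst hD
  classical
  have hdisj : ∀ c1 ∈ C, ∀ c2 ∈ C, c1 ≠ c2 →
      Disjoint (s.filter fun x => q x = c1) (s.filter fun x => q x = c2) := by
    intro c1 _ c2 _ hne
    refine Finset.disjoint_left.2 fun x hx1 hx2 => hne ?_
    rw [← (Finset.mem_filter.1 hx1).2, ← (Finset.mem_filter.1 hx2).2]
  rw [← Finset.card_biUnion hdisj]
  exact Finset.card_le_card (Finset.biUnion_subset.2 fun c _ => Finset.filter_subset _ _)

set_option maxHeartbeats 1000000 in
lemma folner_of_injective {H G : Type u} [Group H] [Group G] (φ : H →* G)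
    (hφ : Function.Injective φ) (hG : FolnerCond G) : FolnerCond H := by
  intro F ε hε
  rcases F.eq_empty_or_nonempty with rfl | hFne
  · exact ⟨{1}, Finset.singleton_nonempty 1, fun g hg => absurd hg (by simp)⟩
  have hFpos : (0:ℝ) < F.card := by exact_mod_cast hFne.card_pos
  have hres := hG (F.image φ) (ε / F.card) (div_pos hε hFpos)
  obtain ⟨K, hKne, hK⟩ := hres
  set R := φ.range with hR
  let q : G → Quotient (QuotientGroup.rightRel R) := fun x => Quotient.mk'' x
  have hq_mul : ∀ (g : H) (x : G), q (φ g * x) = q x := by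
    intro g x
    refine Quotient.sound' ?_
    rw [QuotientGroup.rightRel_apply]
    have h1 : x * (φ g * x)⁻¹ = (φ g)⁻¹ := by group
    rw [h1]
    exact inv_mem ⟨g, rfl⟩
  have hq_rel : ∀ x y : G, q x = q y → x * y⁻¹ ∈ R := by
    intro x y hxy
    have h2 := Quotient.exact' hxy
    rw [QuotientGroup.rightRel_apply] at h2
    have h3 := inv_mem h2
    simpa using h3
  set C := K.image q with hC
  have hsplit : K.card = ∑ c ∈ C, (K.filter fun x => q x = c).card :=
    Finset.card_eq_sum_card_fiberwise (fun x hx => Finset.mem_image_of_mem q hx)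
  have hAfilter : ∀ (g : H) (c : Quotient (QuotientGroup.rightRel R)),
      (K.image fun x => φ g * x).filter (fun x => q x = c)
        = (K.filter fun x => q x = c).image (fun x => φ g * x) := by
    intro g c
    ext y
    simp only [Finset.mem_filter, Finset.mem_image]
    constructor
    · rintro ⟨⟨x, hx, rfl⟩, hqc⟩
      exact ⟨x, ⟨hx, by rwa [hq_mul] at hqc⟩, rfl⟩
    · rintro ⟨x, ⟨hx, hqc⟩, rfl⟩
      exact ⟨⟨x, hx, rfl⟩, by rwa [hq_mul]⟩
  let T : Quotient (QuotientGroup.rightRel R) → ℕ := fun c =>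
    ∑ g ∈ F, ((symmDiff (K.image fun x => φ g * x) K).filter fun x => q x = c).card
  have hT : ∀ c, T c =
    ∑ g ∈ F, ((symmDiff (K.image fun x => φ g * x) K).filter fun x => q x = c).card :=
    fun _ => rfl
  have key : ∃ c ∈ C, (T c : ℝ) < ε * ((K.filter fun x => q x = c).card : ℝ) := by
    by_contra hcon
    push_neg at hcon
    have h1 : ε * (K.card : ℝ) ≤ ∑ c ∈ C, (T c : ℝ) := by
      calc ε * (K.card:ℝ) = ∑ c ∈ C, ε * ((K.filter fun x => q x = c).card : ℝ) := by
            rw [← Finset.mul_sum]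
            congr 1
            rw [hsplit]
            push_cast
            rfl
        _ ≤ _ := Finset.sum_le_sum hcon
    have h2 : (∑ c ∈ C, (T c:ℝ)) ≤
        ∑ g ∈ F, ((symmDiff (K.image fun x => φ g * x) K).card : ℝ) := by
      have h2a : (∑ c ∈ C, T c) ≤
          ∑ g ∈ F, (symmDiff (K.image fun x => φ g * x) K).card := by
        simp only [hT]
        rw [Finset.sum_comm]
        exact Finset.sum_le_sum fun g _ => sum_fiber_card_le (symmDiff (K.image fun x => φ g * x) K) q C
      exact_mod_cast h2a
    have h3 : (∑ g ∈ F, ((symmDiff (K.image fun x => φ g * x) K).card : ℝ)) <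
        ∑ _g ∈ F, (ε / F.card) * (K.card:ℝ) :=
      Finset.sum_lt_sum_of_nonempty hFne
        (fun g hg => hK (φ g) (Finset.mem_image_of_mem φ hg))
    have h4 : (∑ _g ∈ F, (ε / F.card) * (K.card:ℝ)) = ε * K.card := by
      rw [Finset.sum_const, nsmul_eq_mul]
      field_simp
    linarith
  obtain ⟨c, hcC, hc⟩ := key
  set Kc := K.filter fun x => q x = c with hKc
  obtain ⟨x₀, hx₀K⟩ : Kc.Nonempty := by
    obtain ⟨y, hy, hqy⟩ := Finset.mem_image.1 hcC
    exact ⟨y, Finset.mem_filter.2 ⟨hy, hqy⟩⟩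
  have hx₀c : q x₀ = c := (Finset.mem_filter.1 hx₀K).2
  have hmemR : ∀ x ∈ Kc, x * x₀⁻¹ ∈ R := fun x hx =>
    hq_rel x x₀ (by rw [(Finset.mem_filter.1 hx).2, hx₀c])
  set ρ : G → H := Function.invFun φ with hρdef
  have hφρ : ∀ x ∈ Kc, φ (ρ (x * x₀⁻¹)) = x * x₀⁻¹ := by
    intro x hx
    obtain ⟨h, hh⟩ := hmemR x hx
    exact Function.invFun_eq ⟨h, hh⟩
  set K' : Finset H := Kc.image fun x => ρ (x * x₀⁻¹) with hK'
  have hinjOn : Set.InjOn (fun x => ρ (x * x₀⁻¹)) Kc := by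
    intro x hx y hy hxy
    have h5 := congrArg φ hxy
    rw [hφρ x hx, hφρ y hy] at h5
    exact mul_right_cancel h5
  have hK'card : K'.card = Kc.card := Finset.card_image_of_injOn hinjOn
  have hK'ne : K'.Nonempty := Finset.Nonempty.image ⟨x₀, hx₀K⟩ _
  refine ⟨K', hK'ne, ?_⟩
  intro g hg
  have hφK' : K'.image φ = Kc.image fun x => x * x₀⁻¹ := by
    rw [hK', Finset.image_image]
    exact Finset.image_congr fun x hx => hφρ x hx
  have c1 : (symmDiff (K'.image fun x => g * x) K').card
      = (symmDiff ((K'.image fun x => g * x).image φ) (K'.image φ)).card := by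
    rw [← Finset.image_symmDiff _ _ hφ, Finset.card_image_of_injective _ hφ]
  have c2 : (K'.image fun x => g * x).image φ = (Kc.image fun x => φ g * x).image
      (fun x => x * x₀⁻¹) := by
    rw [Finset.image_image, hK', Finset.image_image, Finset.image_image]
    refine Finset.image_congr fun x hx => ?_
    simp only [Function.comp_apply]
    rw [map_mul, hφρ x hx, mul_assoc]
  have c3 : symmDiff ((K'.image fun x => g * x).image φ) (K'.image φ)
      = (symmDiff (Kc.image fun x => φ g * x) Kc).image (fun x => x * x₀⁻¹) := by
    rw [c2, hφK', Finset.image_symmDiff _ _ (mul_left_injective x₀⁻¹)]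
  have c4 : (symmDiff (K'.image fun x => g * x) K').card
      = (symmDiff (Kc.image fun x => φ g * x) Kc).card := by
    rw [c1, c3, Finset.card_image_of_injective _ (mul_left_injective x₀⁻¹)]
  have c5 : symmDiff (Kc.image fun x => φ g * x) Kc
      = (symmDiff (K.image fun x => φ g * x) K).filter fun x => q x = c := by
    rw [filter_symmDiff', hAfilter, hKc]
  have c6 : (symmDiff (K'.image fun x => g * x) K').card ≤ T c := by
    rw [c4, c5, hT c]
    exact Finset.single_le_sum (f := fun g =>
      ((symmDiff (K.image fun x => φ g * x) K).filter fun x => q x = c).card)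
      (fun _ _ => Nat.zero_le _) hg
  have c7 : ((symmDiff (K'.image fun x => g * x) K').card : ℝ) ≤ (T c : ℝ) := by
    exact_mod_cast c6
  rw [hK'card]
  exact c7.trans_lt hc

lemma lift_naturality {n : ℕ} (w : FreeGroup (Fin n)) {A B : Type*} [Group A] [Group B]
    (φ : A →* B) (a : Fin n → A) :
    φ (FreeGroup.lift a w) = FreeGroup.lift (fun k => φ (a k)) w := by
  have h : φ.comp (FreeGroup.lift a) = FreeGroup.lift (fun k => φ (a k)) :=
    FreeGroup.ext_hom _ _ (fun k => by simp)
  exact DFunLike.congr_fun h w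

lemma satlaw_pi {n : ℕ} (w : FreeGroup (Fin n)) {I : Type u} (G : I → Type u)
    [∀ i, Group (G i)] (h : ∀ i, SatLaw w (G i)) : SatLaw w (∀ i, G i) := by
  intro a
  funext i
  have := lift_naturality w (Pi.evalMonoidHom G i) a
  calc FreeGroup.lift a w i = (Pi.evalMonoidHom G i) (FreeGroup.lift a w) := rfl
    _ = FreeGroup.lift (fun k => a k i) w := this
    _ = 1 := h i _

-- support of an element of a dependent product
def piSupp {I : Type u} {G : I → Type u} [∀ i, Group (G i)] (f : ∀ i, G i) : Set I :=
  {i | f i ≠ 1}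

-- the subgroup of finitely supported elements
def finSupp (I : Type u) (G : I → Type u) [∀ i, Group (G i)] : Subgroup (∀ i, G i) where
  carrier := {f | (piSupp f).Finite}
  one_mem' := Set.finite_empty.subset (fun i hi => absurd rfl hi)
  mul_mem' := fun {f g} hf hg => (hf.union hg).subset (fun i hi => by
    by_contra hni
    simp only [Set.mem_union, piSupp, Set.mem_setOf_eq, not_or, not_not] at hni
    exact hi (by simp [piSupp, Set.mem_setOf_eq, Pi.mul_apply, hni.1, hni.2]))
  inv_mem' := fun {f} hf => hf.subset (fun i hi => by
    simp only [piSupp, Set.mem_setOf_eq, Pi.inv_apply, ne_eq, inv_eq_one] at hi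
    exact hi)

lemma finSupp_mem {I : Type u} (G : I → Type u) [∀ i, Group (G i)] (f : ∀ i, G i) :
    f ∈ finSupp I G ↔ (piSupp f).Finite := Iff.rfl

lemma finSupp_supp_finite {I : Type u} {G : I → Type u} [∀ i, Group (G i)]
    (x : finSupp I G) : (piSupp (x : ∀ i, G i)).Finite := x.2

lemma satlaw_subgroup {n : ℕ} (w : FreeGroup (Fin n)) {A : Type u} [Group A]
    (S : Subgroup A) (h : SatLaw w A) : SatLaw w S := by
  intro a
  have hinj : Function.Injective S.subtype := S.subtype_injective
  apply hinj
  rw [lift_naturality w S.subtype a, map_one]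
  exact h _

noncomputable def deltaHom {I : Type u} (G : I → Type u) [∀ i, Group (G i)] (i : I) :
    G i →* finSupp I G :=
  (MonoidHom.mulSingle G i).codRestrict (finSupp I G)
    (fun x => show (piSupp (Pi.mulSingle i x)).Finite from
      (Set.finite_singleton i).subset (fun j hj => by
        by_contra hji
        exact hj (Pi.mulSingle_eq_of_ne (by simpa using hji) x)))

lemma deltaHom_eq_one_iff {I : Type u} (G : I → Type u) [∀ i, Group (G i)] (i : I)
    (x : G i) : deltaHom G i x = 1 ↔ x = 1 := by
  constructor
  · intro h
    have h1 : (deltaHom G i x : ∀ j, G j) = 1 := congrArg _ h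
    have h2 : Pi.mulSingle i x i = (1 : ∀ j, G j) i := congrFun h1 i
    simpa using h2
  · rintro rfl
    exact map_one _

section
variable {I : Type u} (G : I → Type u) [∀ i, Group (G i)]

noncomputable def suppEmbed (S : Finset I) : (∀ j : {i // i ∈ S}, G j.1) →* finSupp I G where
  toFun f := ⟨fun i => if h : i ∈ S then f ⟨i, h⟩ else 1, by
    rw [finSupp_mem]
    refine S.finite_toSet.subset (fun i hi => ?_)
    by_contra hiS
    exact hi (dif_neg hiS)⟩
  map_one' := by
    refine Subtype.ext (funext fun i => ?_)
    by_cases h : i ∈ S <;> simp [h]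
  map_mul' f g := by
    refine Subtype.ext (funext fun i => ?_)
    by_cases h : i ∈ S <;> simp [h]

lemma suppEmbed_injective (S : Finset I) : Function.Injective (suppEmbed G S) := by
  intro f g hfg
  funext j
  have h1 := congrFun (congrArg Subtype.val hfg) j.1
  simpa [suppEmbed, dif_pos j.2] using h1

lemma folner_finSupp (hG : ∀ i, FolnerCond (G i)) : FolnerCond (finSupp I G) := by
  apply folner_of_forall_range
  intro F
  set S : Finset I := F.sup (fun x => Set.Finite.toFinset ((finSupp_mem G x.1).mp x.2)) with hS
  refine ⟨∀ j : {i // i ∈ S}, G j.1, inferInstance, suppEmbed G S, suppEmbed_injective G S,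
    ?_, folner_pi _ _ (fun j => hG j.1)⟩
  intro x hx
  refine ⟨fun j => (x : ∀ i, G i) j.1, ?_⟩
  refine Subtype.ext (funext fun i => ?_)
  show (if h : i ∈ S then (x : ∀ i, G i) i else 1) = (x : ∀ i, G i) i
  by_cases h : i ∈ S
  · rw [dif_pos h]
  · rw [dif_neg h]
    by_contra hne
    have hmem : i ∈ Set.Finite.toFinset ((finSupp_mem G x.1).mp x.2) := by
      rw [Set.Finite.mem_toFinset]
      exact fun hh => hne hh.symm
    exact h (Finset.mem_of_subset (Finset.le_sup hx) hmem)
end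

section
variable {I : Type u} (G : I → Type u) [∀ i, Group (G i)] (𝒰 : Ultrafilter I)

/-- the natural hom from the full product into the ultrapower of the direct sum -/
noncomputable def psiHom : (∀ i, G i) →* Filter.Germ (𝒰 : Filter I) (finSupp I G) :=
  (Filter.Germ.coeMulHom _).comp
    { toFun := fun f => fun i => deltaHom G i (f i),
      map_one' := funext fun i => map_one _,
      map_mul' := fun f g => funext fun i => map_mul _ _ _ }

lemma psiHom_eq_one_iff (f : ∀ i, G i) :
    psiHom G 𝒰 f = 1 ↔ ∀ᶠ i in (𝒰 : Filter I), f i = 1 := by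
  have h1 : psiHom G 𝒰 f = ((fun i => deltaHom G i (f i) : I → finSupp I G) :
      Filter.Germ (𝒰 : Filter I) (finSupp I G)) := rfl
  have h2 : (1 : Filter.Germ (𝒰 : Filter I) (finSupp I G))
      = ((1 : I → finSupp I G) : Filter.Germ (𝒰 : Filter I) (finSupp I G)) := rfl
  rw [h1, h2, Filter.Germ.coe_eq]
  unfold Filter.EventuallyEq
  constructor
  · exact fun h => h.mono fun i hi => (deltaHom_eq_one_iff G i (f i)).mp hi
  · exact fun h => h.mono fun i hi => (deltaHom_eq_one_iff G i (f i)).mpr hi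
end

/-- If every amenable group satisfying the law `w = e` has all of its ultrapowers
amenable, then the class of amenable groups satisfying the law `w = e` is closed
under arbitrary ultraproducts (realized as quotients of direct products by the
subgroup of `𝒰`-almost everywhere trivial elements). -/
theorem stmt16 {n : ℕ} (w : FreeGroup (Fin n))
    (hyp : ∀ (G : Type u) [Group G], FolnerCond G → SatLaw w G →
      ∀ (I : Type u) (𝒰 : Ultrafilter I),
        FolnerCond (Filter.Germ (𝒰 : Filter I) G)) :
    ∀ (I : Type u) (G : I → Type u) [∀ i, Group (G i)] (𝒰 : Ultrafilter I),
      (∀ i, FolnerCond (G i) ∧ SatLaw w (G i)) →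
      ∀ (K : Type u) [Group K] (π : (∀ i, G i) →* K),
        Function.Surjective π →
        (∀ f : ∀ i, G i, π f = 1 ↔ ∀ᶠ i in (𝒰 : Filter I), f i = 1) →
        FolnerCond K ∧ SatLaw w K := by
  intro I G _ 𝒰 hGs K _ π hsurj hker
  have hsat_pi : SatLaw w (∀ i, G i) := satlaw_pi w G (fun i => (hGs i).2)
  constructor
  · -- Folner
    have hΔF : FolnerCond (finSupp I G) := folner_finSupp G (fun i => (hGs i).1)
    have hΔL : SatLaw w (finSupp I G) := satlaw_subgroup w _ hsat_pi
    have hGerm : FolnerCond (Filter.Germ (𝒰 : Filter I) (finSupp I G)) :=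
      hyp _ hΔF hΔL I 𝒰
    have hkerle : π.ker ≤ (psiHom G 𝒰).ker := by
      intro f hf
      rw [MonoidHom.mem_ker] at hf ⊢
      rw [psiHom_eq_one_iff]
      exact (hker f).mp hf
    let φK : K →* Filter.Germ (𝒰 : Filter I) (finSupp I G) :=
      π.liftOfRightInverse (Function.surjInv hsurj)
        (Function.rightInverse_surjInv hsurj) ⟨psiHom G 𝒰, hkerle⟩
    have hφKcomp : ∀ f : ∀ i, G i, φK (π f) = psiHom G 𝒰 f := fun f =>
      π.liftOfRightInverse_comp_apply _ _ ⟨psiHom G 𝒰, hkerle⟩ f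
    have hφKinj : Function.Injective φK := by
      rw [injective_iff_map_eq_one]
      intro k hk
      obtain ⟨f, rfl⟩ := hsurj k
      rw [hφKcomp f, psiHom_eq_one_iff] at hk
      exact (hker f).mpr hk
    exact folner_of_injective φK hφKinj hGerm
  · -- SatLaw
    intro a
    let b : Fin n → ∀ i, G i := fun k => Function.surjInv hsurj (a k)
    have hb : ∀ k, π (b k) = a k := fun k => Function.surjInv_eq hsurj (a k)
    have h1 : FreeGroup.lift a w = π (FreeGroup.lift b w) := by
      have hba : (fun k => π (b k)) = a := funext hb
      rw [lift_naturality w π b, hba]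
    rw [h1, hsat_pi b, map_one]
end

section
/- For any group G, the set of left-invariant total orders on G (identified with their positive cones, as subsets of G) is a closed subset of the power set 2^G with the product topology. Consequently, if every finitely generated subgroup of G is left-orderable, then G is left-orderable. -/
section Aux

variable {G : Type*} [Group G]

/-- cones restricted to a subset `A`. -/
def coneSet (A : Set G) : Set (G → Bool) :=
  {P | (∀ a ∈ A, ∀ b ∈ A, P a = true → P b = true → P (a * b) = true) ∧
    (∀ g ∈ A, P g = true ∨ P g⁻¹ = true ∨ g = 1) ∧
    (∀ g ∈ A, P g = true → P g⁻¹ ≠ true) ∧ P 1 ≠ true}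

omit [Group G] in
lemma clopen_eval (x : G) (v : Bool) : IsClopen {P : G → Bool | P x = v} :=
  (isClopen_discrete {v}).preimage (continuous_apply x)

lemma coneSet_closed (A : Set G) : IsClosed (coneSet A) := by
  have h1 : ∀ a b : G, IsClosed {P : G → Bool | P a = true → P b = true → P (a * b) = true} := by
    intro a b
    have : {P : G → Bool | P a = true → P b = true → P (a * b) = true} =
        {P : G → Bool | P a = true}ᶜ ∪ ({P : G → Bool | P b = true}ᶜ ∪
          {P : G → Bool | P (a * b) = true}) := by
      ext P; simp [imp_iff_not_or]
    rw [this]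
    exact ((clopen_eval a true).compl.union
      (((clopen_eval b true).compl.union (clopen_eval (a * b) true)))).isClosed
  have h2 : ∀ g : G, IsClosed {P : G → Bool | P g = true ∨ P g⁻¹ = true ∨ g = 1} := by
    intro g
    by_cases hg : g = 1
    · have : {P : G → Bool | P g = true ∨ P g⁻¹ = true ∨ g = 1} = Set.univ := by
        ext P; simp [hg]
      rw [this]; exact isClosed_univ
    · have : {P : G → Bool | P g = true ∨ P g⁻¹ = true ∨ g = 1} =
          {P : G → Bool | P g = true} ∪ {P : G → Bool | P g⁻¹ = true} := by
        ext P; simp [hg]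
      rw [this]
      exact ((clopen_eval g true).union (clopen_eval g⁻¹ true)).isClosed
  have h3 : ∀ g : G, IsClosed {P : G → Bool | P g = true → P g⁻¹ ≠ true} := by
    intro g
    have : {P : G → Bool | P g = true → P g⁻¹ ≠ true} =
        {P : G → Bool | P g = true}ᶜ ∪ {P : G → Bool | P g⁻¹ = true}ᶜ := by
      ext P; simp [imp_iff_not_or]
    rw [this]
    exact ((clopen_eval g true).compl.union (clopen_eval g⁻¹ true).compl).isClosed
  have h4 : IsClosed {P : G → Bool | P 1 ≠ true} := by
    have : {P : G → Bool | P 1 ≠ true} = {P : G → Bool | P 1 = true}ᶜ := by ext P; simp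
    rw [this]; exact (clopen_eval 1 true).compl.isClosed
  have : coneSet A = (⋂ a ∈ A, ⋂ b ∈ A,
        {P : G → Bool | P a = true → P b = true → P (a * b) = true}) ∩
      ((⋂ g ∈ A, {P : G → Bool | P g = true ∨ P g⁻¹ = true ∨ g = 1}) ∩
      ((⋂ g ∈ A, {P : G → Bool | P g = true → P g⁻¹ ≠ true}) ∩
        {P : G → Bool | P 1 ≠ true})) := by
    ext P
    simp only [coneSet, Set.mem_setOf_eq, Set.mem_inter_iff, Set.mem_iInter]
  rw [this]
  exact (isClosed_biInter fun a _ => isClosed_biInter fun b _ => h1 a b).inter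
    ((isClosed_biInter fun g _ => h2 g).inter
      ((isClosed_biInter fun g _ => h3 g).inter h4))

lemma coneSet_anti {A B : Set G} (h : A ⊆ B) : coneSet B ⊆ coneSet A := by
  rintro P ⟨p1, p2, p3, p4⟩
  exact ⟨fun a ha b hb => p1 a (h ha) b (h hb), fun g hg => p2 g (h hg),
    fun g hg => p3 g (h hg), p4⟩

lemma coneSet_nonempty (hfg : ∀ H : Subgroup G, H.FG → LeftOrderable H)
    (F : Finset G) : (coneSet (↑F : Set G)).Nonempty := by
  classical
  set H := Subgroup.closure (↑F : Set G) with hH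
  obtain ⟨lt, hsto, hinv⟩ := hfg H ⟨F, rfl⟩
  haveI := hsto
  set P : G → Bool := fun g => decide (∃ h : g ∈ H, lt 1 ⟨g, h⟩) with hP
  have key : ∀ (g : G) (hg : g ∈ H), (P g = true ↔ lt 1 ⟨g, hg⟩) := by
    intro g hg
    simp only [hP, decide_eq_true_eq]
    exact ⟨fun ⟨h', hl⟩ => hl, fun hl => ⟨hg, hl⟩⟩
  have hmem : ∀ g ∈ F, g ∈ H := fun g hg => Subgroup.subset_closure hg
  refine ⟨P, ?_, ?_, ?_, ?_⟩
  · intro a ha b hb hpa hpb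
    have haH := hmem a ha; have hbH := hmem b hb
    have habH : a * b ∈ H := mul_mem haH hbH
    rw [key a haH] at hpa
    rw [key b hbH] at hpb
    rw [key (a * b) habH]
    have h1 : lt (⟨a, haH⟩ : H) (⟨a, haH⟩ * ⟨b, hbH⟩) := by
      have := hinv 1 ⟨b, hbH⟩ ⟨a, haH⟩ hpb
      simpa using this
    exact trans_of lt hpa h1
  · intro g hg
    have hgH := hmem g hg
    rcases trichotomous_of lt 1 (⟨g, hgH⟩ : H) with h | h | h
    · left; rw [key g hgH]; exact h
    · right; right
      have : (⟨g, hgH⟩ : H) = 1 := h.symm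
      exact congrArg Subtype.val this
    · right; left
      rw [key g⁻¹ (inv_mem hgH)]
      have := hinv _ _ (⟨g, hgH⟩ : H)⁻¹ h
      simp at this; exact this
  · intro g hg hpg hpginv
    have hgH := hmem g hg
    rw [key g hgH] at hpg
    rw [key g⁻¹ (inv_mem hgH)] at hpginv
    have h1 : lt (⟨g, hgH⟩ : H) 1 := by
      have := hinv _ _ (⟨g, hgH⟩ : H) hpginv
      simp at this; exact this
    exact irrefl_of lt 1 (trans_of lt hpg h1)
  · intro hp1
    rw [key 1 (one_mem H)] at hp1
    exact irrefl_of lt 1 hp1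

end Aux

/-- The set of positive cones of left-invariant total orders on `G` (as elements
of `2^G = G → Bool` with the product topology) is closed; consequently, if every
finitely generated subgroup of `G` is left-orderable, then so is `G`. -/
theorem stmt18 {G : Type*} [Group G] :
    IsClosed {P : G → Bool |
      (∀ a b : G, P a = true → P b = true → P (a * b) = true) ∧
      (∀ g : G, P g = true ∨ P g⁻¹ = true ∨ g = 1) ∧
      (∀ g : G, P g = true → P g⁻¹ ≠ true) ∧ P 1 ≠ true} ∧
    ((∀ H : Subgroup G, H.FG → LeftOrderable H) → LeftOrderable G) := by
  classical
  constructor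
  · have : {P : G → Bool |
        (∀ a b : G, P a = true → P b = true → P (a * b) = true) ∧
        (∀ g : G, P g = true ∨ P g⁻¹ = true ∨ g = 1) ∧
        (∀ g : G, P g = true → P g⁻¹ ≠ true) ∧ P 1 ≠ true} = coneSet (Set.univ : Set G) := by
      ext P; simp [coneSet]
    rw [this]; exact coneSet_closed _
  · intro hfg
    have hdir : Directed (· ⊇ ·) (fun F : Finset G => coneSet (↑F : Set G)) := by
      intro F F'
      exact ⟨F ∪ F', coneSet_anti (Finset.coe_subset.mpr Finset.subset_union_left),
        coneSet_anti (Finset.coe_subset.mpr Finset.subset_union_right)⟩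
    obtain ⟨P, hP⟩ := IsCompact.nonempty_iInter_of_directed_nonempty_isCompact_isClosed
      (fun F : Finset G => coneSet (↑F : Set G)) hdir (coneSet_nonempty hfg)
      (fun F => (coneSet_closed _).isCompact) (fun F => coneSet_closed _)
    simp only [Set.mem_iInter] at hP
    have p1 : ∀ a b : G, P a = true → P b = true → P (a * b) = true := by
      intro a b
      exact (hP {a, b}).1 a (by simp) b (by simp)
    have p2 : ∀ g : G, P g = true ∨ P g⁻¹ = true ∨ g = 1 := by
      intro g; exact (hP {g}).2.1 g (by simp)
    have p3 : ∀ g : G, P g = true → P g⁻¹ ≠ true := by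
      intro g; exact (hP {g}).2.2.1 g (by simp)
    have p4 : P 1 ≠ true := (hP ∅).2.2.2
    refine ⟨fun g h => P (g⁻¹ * h) = true, ?_, ?_⟩
    · refine { trichotomous := ?_, irrefl := ?_, trans := ?_ }
      · intro a b
        rcases p2 (a⁻¹ * b) with h | h | h
        · exact fun h1 => absurd h h1
        · intro _ h2; exfalso; apply h2
          rw [show (a⁻¹ * b)⁻¹ = b⁻¹ * a by group] at h
          exact h
        · intro _ _; exact inv_mul_eq_one.mp h
      · intro a hh
        rw [inv_mul_cancel] at hh
        exact p4 hh
      · intro a b c hab hbc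
        have := p1 _ _ hab hbc
        rwa [show a⁻¹ * b * (b⁻¹ * c) = a⁻¹ * c by group] at this
    · intro f g h hfg2
      show P ((h * f)⁻¹ * (h * g)) = true
      rw [show (h * f)⁻¹ * (h * g) = f⁻¹ * g by group]
      exact hfg2
end
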